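/- arXiv:2206.13679 — 14 statements merged into one kernel-verified Lean document; each statement's English description precedes it below -/
import Mathlib

section
/- Let ρ = (ρ_α)_{α∈I} be a family of risk measures on a convex cone X of random variables containing all constants, with ρ_α(X) decreasing in α, and suppose there exists γ ∈ ℝ such that every ρ_β, β ∈ I, satisfies [PH]_γ, i.e. ρ_β(λX) = λ^γ ρ_β(X) for all λ > 0 and X ∈ X. Then for each α ∈ I the diversification quotient DQ^ρ_α satisfies scale invariance [SI]: DQ^ρ_α(λX) = DQ^ρ_α(X) for all λ > 0 and X ∈ X^n. -/
open MeasureTheory Filter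

open scoped Classical in
/-- The diversification quotient `DQ^ρ_α` built from the family `ρ = (ρ_β)_{β ∈ I}`,
with index set `I = (0, ᾱ)` and the convention `inf ∅ = ᾱ`. -/
noncomputable def DQ {Ω : Type*} {n : ℕ} (αbar : EReal) (ρ : ℝ → (Ω → ℝ) → ℝ)
    (α : ℝ) (X : Fin n → Ω → ℝ) : EReal :=
  (if ({β : ℝ | 0 < β ∧ (β : EReal) < αbar ∧
        ρ β (fun ω => ∑ i, X i ω) ≤ ∑ i, ρ α (X i)}).Nonempty
    then ((sInf {β : ℝ | 0 < β ∧ (β : EReal) < αbar ∧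
        ρ β (fun ω => ∑ i, X i ω) ≤ ∑ i, ρ α (X i)} : ℝ) : EReal)
    else αbar) * ((α⁻¹ : ℝ) : EReal)

/-- if every `ρ_β` is positively homogeneous of degree `γ` ([PH]_γ), then
`DQ^ρ_α` is scale invariant [SI]. -/
theorem stmt_2 {Ω : Type*} (𝒳 : Set (Ω → ℝ))
    (hadd : ∀ X ∈ 𝒳, ∀ Y ∈ 𝒳, X + Y ∈ 𝒳)
    (hsmul : ∀ X ∈ 𝒳, ∀ c : ℝ, 0 < c → c • X ∈ 𝒳)
    (hconst : ∀ c : ℝ, (fun _ : Ω => c) ∈ 𝒳)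
    (αbar : EReal) (hαbar : 0 < αbar)
    (ρ : ℝ → (Ω → ℝ) → ℝ)
    (hdec : ∀ Y ∈ 𝒳, ∀ β γ' : ℝ, 0 < β → (β : EReal) < αbar → 0 < γ' → (γ' : EReal) < αbar →
      β ≤ γ' → ρ γ' Y ≤ ρ β Y)
    (γ : ℝ)
    (hPH : ∀ β : ℝ, 0 < β → (β : EReal) < αbar → ∀ Y ∈ 𝒳, ∀ l : ℝ, 0 < l →
      ρ β (l • Y) = l ^ γ * ρ β Y)
    (α : ℝ) (hα : 0 < α) (hαI : (α : EReal) < αbar)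
    (n : ℕ) (hn : 0 < n) (X : Fin n → Ω → ℝ) (hX : ∀ i, X i ∈ 𝒳)
    (l : ℝ) (hl : 0 < l) :
    DQ αbar ρ α (fun i => l • X i) = DQ αbar ρ α X := by

  have hS : (fun ω => ∑ i, X i ω) ∈ 𝒳 := by
    have h : ∀ s : Finset (Fin n), (fun ω => ∑ i ∈ s, X i ω) ∈ 𝒳 := by
      intro s
      induction s using Finset.induction with
      | empty => simpa using hconst 0
      | @insert a s' ha ih =>
        have := hadd _ (hX a) _ ih
        have e : X a + (fun ω => ∑ i ∈ s', X i ω) = fun ω => ∑ i ∈ insert a s', X i ω := by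
          funext ω; simp [Finset.sum_insert ha]
        rwa [e] at this
    exact h Finset.univ
  have hlγ : (0:ℝ) < l ^ γ := Real.rpow_pos_of_pos hl γ
  have hset : {β : ℝ | 0 < β ∧ (β : EReal) < αbar ∧
        ρ β (fun ω => ∑ i, (fun i => l • X i) i ω) ≤ ∑ i, ρ α ((fun i => l • X i) i)}
      = {β : ℝ | 0 < β ∧ (β : EReal) < αbar ∧
        ρ β (fun ω => ∑ i, X i ω) ≤ ∑ i, ρ α (X i)} := by
    ext β
    simp only [Set.mem_setOf_eq]
    have e1 : (fun ω => ∑ i, (fun i => l • X i) i ω) = l • (fun ω => ∑ i, X i ω) := by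
      funext ω; simp [Finset.mul_sum]
    have e2 : ∑ i, ρ α ((fun i => l • X i) i) = l ^ γ * ∑ i, ρ α (X i) := by
      simp only [Finset.mul_sum]
      exact Finset.sum_congr rfl fun i _ => hPH α hα hαI _ (hX i) l hl
    constructor <;> rintro ⟨h1, h2, h3⟩ <;> refine ⟨h1, h2, ?_⟩
    · rw [e1, hPH β h1 h2 _ hS l hl, e2] at h3
      exact le_of_mul_le_mul_left h3 hlγ
    · rw [e1, hPH β h1 h2 _ hS l hl, e2]
      exact mul_le_mul_of_nonneg_left h3 hlγ.le
  simp only [DQ]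
  rw [hset]
end

section
/- Let ρ = (ρ_α)_{α∈I} be a family of risk measures on a convex cone X of random variables containing all constants, with ρ_α(X) decreasing in α, and suppose there exists m ∈ ℝ such that every ρ_β, β ∈ I, satisfies [CA]_m, i.e. ρ_β(X+c) = ρ_β(X) + mc for all c ∈ ℝ and X ∈ X. Then for each α ∈ I the diversification quotient DQ^ρ_α satisfies location invariance [LI]: DQ^ρ_α(X+c) = DQ^ρ_α(X) for all constant vectors c ∈ ℝ^n and X ∈ X^n. -/
open MeasureTheory Filter

/-- if every `ρ_β` satisfies constant additivity with slope `m` ([CA]_m), then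
`DQ^ρ_α` is location invariant [LI]. -/
theorem stmt_3 {Ω : Type*} (𝒳 : Set (Ω → ℝ))
    (hadd : ∀ X ∈ 𝒳, ∀ Y ∈ 𝒳, X + Y ∈ 𝒳)
    (hsmul : ∀ X ∈ 𝒳, ∀ c : ℝ, 0 < c → c • X ∈ 𝒳)
    (hconst : ∀ c : ℝ, (fun _ : Ω => c) ∈ 𝒳)
    (αbar : EReal) (hαbar : 0 < αbar)
    (ρ : ℝ → (Ω → ℝ) → ℝ)
    (hdec : ∀ Y ∈ 𝒳, ∀ β γ : ℝ, 0 < β → (β : EReal) < αbar → 0 < γ → (γ : EReal) < αbar →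
      β ≤ γ → ρ γ Y ≤ ρ β Y)
    (m : ℝ)
    (hCA : ∀ β : ℝ, 0 < β → (β : EReal) < αbar → ∀ Y ∈ 𝒳, ∀ c : ℝ,
      ρ β (Y + (fun _ => c)) = ρ β Y + m * c)
    (α : ℝ) (hα : 0 < α) (hαI : (α : EReal) < αbar)
    (n : ℕ) (hn : 0 < n) (X : Fin n → Ω → ℝ) (hX : ∀ i, X i ∈ 𝒳)
    (c : Fin n → ℝ) :
    DQ αbar ρ α (fun i => X i + (fun _ => c i)) = DQ αbar ρ α X := by

  classical
  -- the sum of the X i belongs to 𝒳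
  have hsum : ∀ s : Finset (Fin n), s.Nonempty → (∑ i ∈ s, X i) ∈ 𝒳 := by
    intro s hs
    induction hs using Finset.Nonempty.cons_induction with
    | singleton i => simpa using hX i
    | cons i s his hs ih =>
        rw [Finset.sum_cons]
        exact hadd _ (hX i) _ ih
  have hS : (fun ω => ∑ i, X i ω) ∈ 𝒳 := by
    have : (fun ω => ∑ i, X i ω) = ∑ i, X i := by
      funext ω; simp
    rw [this]
    exact hsum Finset.univ (Finset.univ_nonempty_iff.2 ⟨⟨0, hn⟩⟩)
  set C := ∑ i, c i with hC
  have hfun : (fun ω => ∑ i, (X i ω + c i)) =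
      (fun ω => ∑ i, X i ω) + (fun _ => C) := by
    funext ω
    simp [Finset.sum_add_distrib, hC]
  have hrhs : ∑ i, ρ α (X i + fun _ => c i) = (∑ i, ρ α (X i)) + m * C := by
    have : ∀ i, ρ α (X i + fun _ => c i) = ρ α (X i) + m * c i := fun i =>
      hCA α hα hαI (X i) (hX i) (c i)
    simp only [this, Finset.sum_add_distrib, hC, Finset.mul_sum]
  have hset : {β : ℝ | 0 < β ∧ (β : EReal) < αbar ∧
        ρ β (fun ω => ∑ i, (X i ω + c i)) ≤ ∑ i, ρ α (X i + fun _ => c i)} =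
      {β : ℝ | 0 < β ∧ (β : EReal) < αbar ∧
        ρ β (fun ω => ∑ i, X i ω) ≤ ∑ i, ρ α (X i)} := by
    ext β
    simp only [Set.mem_setOf_eq]
    refine and_congr_right fun hβ => and_congr_right fun hβ2 => ?_
    rw [hfun, hCA β hβ hβ2 _ hS C, hrhs]
    exact add_le_add_iff_right _
  simp only [DQ, Pi.add_apply]
  rw [hset]
end

section
/- Let ρ = (ρ_α)_{α∈I} be a family of risk measures on a convex cone X of random variables containing all constants, with ρ_α(X) decreasing in α. If for a given α ∈ I the risk measure ρ_α is subadditive, i.e. ρ_α(X+Y) ≤ ρ_α(X) + ρ_α(Y) for all X, Y ∈ X, then the diversification quotient DQ^ρ_α takes values in [0,1]: 0 ≤ DQ^ρ_α(X) ≤ 1 for every X ∈ X^n. -/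
open MeasureTheory Filter

/-- if `ρ_α` is subadditive [SA], then `DQ^ρ_α` takes values in `[0,1]`. -/
theorem stmt_4 {Ω : Type*} (𝒳 : Set (Ω → ℝ))
    (hadd : ∀ X ∈ 𝒳, ∀ Y ∈ 𝒳, X + Y ∈ 𝒳)
    (hsmul : ∀ X ∈ 𝒳, ∀ c : ℝ, 0 < c → c • X ∈ 𝒳)
    (hconst : ∀ c : ℝ, (fun _ : Ω => c) ∈ 𝒳)
    (αbar : EReal) (hαbar : 0 < αbar)
    (ρ : ℝ → (Ω → ℝ) → ℝ)
    (hdec : ∀ Y ∈ 𝒳, ∀ β γ : ℝ, 0 < β → (β : EReal) < αbar → 0 < γ → (γ : EReal) < αbar →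
      β ≤ γ → ρ γ Y ≤ ρ β Y)
    (α : ℝ) (hα : 0 < α) (hαI : (α : EReal) < αbar)
    (hSA : ∀ U ∈ 𝒳, ∀ V ∈ 𝒳, ρ α (U + V) ≤ ρ α U + ρ α V)
    (n : ℕ) (hn : 0 < n) (X : Fin n → Ω → ℝ) (hX : ∀ i, X i ∈ 𝒳) :
    0 ≤ DQ αbar ρ α X ∧ DQ αbar ρ α X ≤ 1 := by
  classical
  -- subadditivity over nonempty finsets
  have key : ∀ s : Finset (Fin n), s.Nonempty →
      (fun ω => ∑ i ∈ s, X i ω) ∈ 𝒳 ∧ ρ α (fun ω => ∑ i ∈ s, X i ω) ≤ ∑ i ∈ s, ρ α (X i) := by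
    intro s hs
    induction hs using Finset.Nonempty.cons_induction with
    | singleton i =>
      simp only [Finset.sum_singleton]
      exact ⟨hX i, le_refl _⟩
    | cons i s hi hs ih =>
      obtain ⟨ihmem, ihle⟩ := ih
      have hmem : (fun ω => ∑ j ∈ Finset.cons i s hi, X j ω) ∈ 𝒳 := by
        simp only [Finset.sum_cons]
        exact hadd _ (hX i) _ ihmem
      refine ⟨hmem, ?_⟩
      have h1 : ρ α ((X i) + fun ω => ∑ j ∈ s, X j ω) ≤ ρ α (X i) + ρ α (fun ω => ∑ j ∈ s, X j ω) :=
        hSA _ (hX i) _ ihmem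
      simp only [Finset.sum_cons]
      calc ρ α (fun ω => X i ω + ∑ j ∈ s, X j ω)
          ≤ ρ α (X i) + ρ α (fun ω => ∑ j ∈ s, X j ω) := h1
        _ ≤ ρ α (X i) + ∑ j ∈ s, ρ α (X j) := by linarith
  have huniv := key Finset.univ (Finset.univ_nonempty_iff.mpr ⟨⟨0, hn⟩⟩)
  set S : Set ℝ := {β : ℝ | 0 < β ∧ (β : EReal) < αbar ∧
      ρ β (fun ω => ∑ i, X i ω) ≤ ∑ i, ρ α (X i)} with hS
  have hαS : α ∈ S := ⟨hα, hαI, huniv.2⟩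
  have hne : S.Nonempty := ⟨α, hαS⟩
  have hbdd : BddBelow S := ⟨0, fun x hx => le_of_lt hx.1⟩
  have h0 : (0 : ℝ) ≤ sInf S := le_csInf hne fun x hx => le_of_lt hx.1
  have hle : sInf S ≤ α := csInf_le hbdd hαS
  have hDQ : DQ αbar ρ α X = ((sInf S * α⁻¹ : ℝ) : EReal) := by
    rw [DQ, if_pos hne, ← EReal.coe_mul]
  rw [hDQ]
  constructor
  · exact_mod_cast mul_nonneg h0 (le_of_lt (inv_pos.mpr hα))
  · have : sInf S * α⁻¹ ≤ 1 := by
      rw [← mul_inv_cancel₀ (ne_of_gt hα)]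
      exact mul_le_mul_of_nonneg_right hle (le_of_lt (inv_pos.mpr hα))
    exact_mod_cast this
end

section
/- Let ρ = (ρ_α)_{α∈I} be a family of risk measures on a convex cone X of random variables containing all constants, with ρ_α(X) decreasing in α, let α ∈ I and X = (X_1,…,X_n) ∈ X^n, and assume ρ is left continuous and non-flat from the left at (α, X_1+⋯+X_n). Suppose ρ_0(X_1+⋯+X_n) ≤ ess-sup(X_1+⋯+X_n), where ρ_0(Y) := sup_{β∈I} ρ_β(Y). If X_1+⋯+X_n ≤ ρ_α(X_1)+⋯+ρ_α(X_n) a.s., then DQ^ρ_α(X) = 0. Conversely, if ρ_0(X_1+⋯+X_n) = ess-sup(X_1+⋯+X_n) and DQ^ρ_α(X) = 0, then X_1+⋯+X_n ≤ ρ_α(X_1)+⋯+ρ_α(X_n) a.s. -/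
open MeasureTheory Filter

/-- no insolvency risk with pooled individual capital and `DQ^ρ_α = 0`
(Theorem on interpreting DQ, part (i)). -/
theorem stmt_5 {Ω : Type*} [MeasurableSpace Ω] (μ : Measure Ω) [IsProbabilityMeasure μ]
    (hatomless : ∀ s : Set Ω, MeasurableSet s → 0 < μ s →
      ∃ t, t ⊆ s ∧ MeasurableSet t ∧ 0 < μ t ∧ μ t < μ s)
    (𝒳 : Set (Ω → ℝ))
    (hadd : ∀ X ∈ 𝒳, ∀ Y ∈ 𝒳, X + Y ∈ 𝒳)
    (hsmul : ∀ X ∈ 𝒳, ∀ c : ℝ, 0 < c → c • X ∈ 𝒳)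
    (hconst : ∀ c : ℝ, (fun _ : Ω => c) ∈ 𝒳)
    (αbar : EReal) (hαbar : 0 < αbar)
    (ρ : ℝ → (Ω → ℝ) → ℝ)
    (hdec : ∀ Y ∈ 𝒳, ∀ β γ : ℝ, 0 < β → (β : EReal) < αbar → 0 < γ → (γ : EReal) < αbar →
      β ≤ γ → ρ γ Y ≤ ρ β Y)
    (α : ℝ) (hα : 0 < α) (hαI : (α : EReal) < αbar)
    (n : ℕ) (hn : 0 < n) (X : Fin n → Ω → ℝ) (hX : ∀ i, X i ∈ 𝒳)
    (hlc : Tendsto (fun β => ρ β (fun ω => ∑ i, X i ω)) (nhdsWithin α (Set.Iio α))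
      (nhds (ρ α (fun ω => ∑ i, X i ω))))
    (hnf : ∀ β : ℝ, 0 < β → β < α →
      ρ α (fun ω => ∑ i, X i ω) < ρ β (fun ω => ∑ i, X i ω)) :
    (((⨆ (β : ℝ) (_ : 0 < β) (_ : (β : EReal) < αbar),
          ((ρ β (fun ω => ∑ i, X i ω) : ℝ) : EReal))
        ≤ essSup (fun ω => ((∑ i, X i ω : ℝ) : EReal)) μ) →
      (∀ᵐ ω ∂μ, ∑ i, X i ω ≤ ∑ i, ρ α (X i)) → DQ αbar ρ α X = 0)
    ∧ (((⨆ (β : ℝ) (_ : 0 < β) (_ : (β : EReal) < αbar),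
          ((ρ β (fun ω => ∑ i, X i ω) : ℝ) : EReal))
        = essSup (fun ω => ((∑ i, X i ω : ℝ) : EReal)) μ) →
      DQ αbar ρ α X = 0 →
      (∀ᵐ ω ∂μ, ∑ i, X i ω ≤ ∑ i, ρ α (X i))) := by
  classical
  set S : Ω → ℝ := fun ω => ∑ i, X i ω with hS
  set c : ℝ := ∑ i, ρ α (X i) with hc
  set A : Set ℝ := {β : ℝ | 0 < β ∧ (β : EReal) < αbar ∧ ρ β S ≤ c} with hA
  have hSmem : S ∈ 𝒳 := by
    have : ∀ s : Finset (Fin n), (fun ω => ∑ i ∈ s, X i ω) ∈ 𝒳 := by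
      intro s
      induction s using Finset.induction_on with
      | empty => simpa using hconst 0
      | @insert a s ha ih =>
        have := hadd (X a) (hX a) _ ih
        simpa [Finset.sum_insert ha, Pi.add_def] using this
    exact this Finset.univ
  have hbdd : BddBelow A := ⟨0, fun x hx => le_of_lt hx.1⟩
  have hDQdef : DQ αbar ρ α X =
      (if A.Nonempty then ((sInf A : ℝ) : EReal) else αbar) * ((α⁻¹ : ℝ) : EReal) := rfl
  constructor
  · intro hsup hae
    -- essSup ≤ c
    have hess : essSup (fun ω => ((S ω : ℝ) : EReal)) μ ≤ (c : EReal) :=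
      essSup_le_of_ae_le _ (hae.mono fun ω hω => EReal.coe_le_coe_iff.2 hω)
    have hmem : ∀ β : ℝ, 0 < β → (β : EReal) < αbar → β ∈ A := by
      intro β hβ hβbar
      refine ⟨hβ, hβbar, ?_⟩
      have h1 : ((ρ β S : ℝ) : EReal) ≤ (c : EReal) := by
        refine le_trans ?_ (le_trans hsup hess)
        exact le_iSup_of_le β (le_iSup_of_le hβ (le_iSup_of_le hβbar le_rfl))
      exact_mod_cast h1
    have hne : A.Nonempty := ⟨α, hmem α hα hαI⟩
    have hinf0 : sInf A = 0 := by
      have h1 : 0 ≤ sInf A := le_csInf hne fun x hx => le_of_lt hx.1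
      have h2 : sInf A ≤ 0 := by
        refine le_of_forall_pos_le_add fun ε hε => ?_
        have hmin : min ε α ∈ A := by
          refine hmem _ (lt_min hε hα) (lt_of_le_of_lt ?_ hαI)
          exact_mod_cast min_le_right ε α
        calc sInf A ≤ min ε α := csInf_le hbdd hmin
          _ ≤ ε := min_le_left _ _
          _ = 0 + ε := (zero_add ε).symm
      linarith
    rw [hDQdef, if_pos hne, hinf0, ← EReal.coe_mul]
    simp
  · intro hsup hDQ
    rw [hDQdef] at hDQ
    have hne : A.Nonempty := by
      by_contra hcon
      rw [if_neg hcon] at hDQ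
      have : (0 : EReal) < αbar * ((α⁻¹ : ℝ) : EReal) := by
        apply EReal.mul_pos hαbar
        exact_mod_cast inv_pos.2 hα
      exact absurd hDQ (ne_of_gt this)
    rw [if_pos hne, ← EReal.coe_mul] at hDQ
    have hinf0 : sInf A = 0 := by
      have : sInf A * α⁻¹ = 0 := by exact_mod_cast hDQ
      rcases mul_eq_zero.1 this with h | h
      · exact h
      · exact absurd h (ne_of_gt (inv_pos.2 hα))
    have hρle : ∀ β : ℝ, 0 < β → (β : EReal) < αbar → ρ β S ≤ c := by
      intro β hβ hβbar
      obtain ⟨γ, hγA, hγβ⟩ := (csInf_lt_iff hbdd hne).1 (hinf0 ▸ hβ)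
      exact le_trans (hdec S hSmem γ β hγA.1 hγA.2.1 hβ hβbar hγβ.le) hγA.2.2
    have hsuple : (⨆ (β : ℝ) (_ : 0 < β) (_ : (β : EReal) < αbar),
        ((ρ β S : ℝ) : EReal)) ≤ (c : EReal) := by
      refine iSup_le fun β => iSup_le fun hβ => iSup_le fun hβbar => ?_
      exact_mod_cast hρle β hβ hβbar
    have hess : essSup (fun ω => ((S ω : ℝ) : EReal)) μ ≤ (c : EReal) := hsup ▸ hsuple
    have := ae_le_essSup (μ := μ) (f := fun ω => ((S ω : ℝ) : EReal))
    filter_upwards [this] with ω hω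
    exact EReal.coe_le_coe_iff.1 (le_trans hω hess)
end

section
/- Let ρ = (ρ_α)_{α∈I} be a family of risk measures on a convex cone X of random variables containing all constants, with ρ_α(X) decreasing in α, let α ∈ I and X = (X_1,…,X_n) ∈ X^n, and assume ρ is left continuous and non-flat from the left at (α, X_1+⋯+X_n). Then ρ_α(X_1+⋯+X_n) < ρ_α(X_1)+⋯+ρ_α(X_n) if and only if DQ^ρ_α(X) < 1. -/
open MeasureTheory Filter

/-- diversification benefit exists iff `DQ^ρ_α < 1`
(Theorem on interpreting DQ, part (ii)). -/
theorem stmt_6 {Ω : Type*} (𝒳 : Set (Ω → ℝ))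
    (hadd : ∀ X ∈ 𝒳, ∀ Y ∈ 𝒳, X + Y ∈ 𝒳)
    (hsmul : ∀ X ∈ 𝒳, ∀ c : ℝ, 0 < c → c • X ∈ 𝒳)
    (hconst : ∀ c : ℝ, (fun _ : Ω => c) ∈ 𝒳)
    (αbar : EReal) (hαbar : 0 < αbar)
    (ρ : ℝ → (Ω → ℝ) → ℝ)
    (hdec : ∀ Y ∈ 𝒳, ∀ β γ : ℝ, 0 < β → (β : EReal) < αbar → 0 < γ → (γ : EReal) < αbar →
      β ≤ γ → ρ γ Y ≤ ρ β Y)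
    (α : ℝ) (hα : 0 < α) (hαI : (α : EReal) < αbar)
    (n : ℕ) (hn : 0 < n) (X : Fin n → Ω → ℝ) (hX : ∀ i, X i ∈ 𝒳)
    (hlc : Tendsto (fun β => ρ β (fun ω => ∑ i, X i ω)) (nhdsWithin α (Set.Iio α))
      (nhds (ρ α (fun ω => ∑ i, X i ω))))
    (hnf : ∀ β : ℝ, 0 < β → β < α →
      ρ α (fun ω => ∑ i, X i ω) < ρ β (fun ω => ∑ i, X i ω)) :
    ρ α (fun ω => ∑ i, X i ω) < ∑ i, ρ α (X i) ↔ DQ αbar ρ α X < 1 := by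
  classical
  set S : Set ℝ := {β : ℝ | 0 < β ∧ (β : EReal) < αbar ∧
      ρ β (fun ω => ∑ i, X i ω) ≤ ∑ i, ρ α (X i)} with hSdef
  have hbdd : BddBelow S := ⟨0, fun x hx => le_of_lt hx.1⟩
  have hDQ : DQ αbar ρ α X =
      (if S.Nonempty then ((sInf S : ℝ) : EReal) else αbar) * ((α⁻¹ : ℝ) : EReal) := rfl
  constructor
  · intro h
    have hev : ∀ᶠ β in nhdsWithin α (Set.Iio α),
        ρ β (fun ω => ∑ i, X i ω) < ∑ i, ρ α (X i) :=
      hlc.eventually (eventually_lt_nhds h)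
    have hev2 : ∀ᶠ β in nhdsWithin α (Set.Iio α), 0 < β :=
      eventually_nhdsWithin_of_eventually_nhds (eventually_gt_nhds hα)
    have hev3 : ∀ᶠ β in nhdsWithin α (Set.Iio α), β < α :=
      eventually_mem_nhdsWithin.mono (fun x hx => hx)
    obtain ⟨β, hβ1, hβ2, hβ3⟩ := (hev.and (hev2.and hev3)).exists
    have hβS : β ∈ S := ⟨hβ2, lt_trans (by exact_mod_cast hβ3) hαI, le_of_lt hβ1⟩
    have hSne : S.Nonempty := ⟨β, hβS⟩
    rw [hDQ, if_pos hSne, ← EReal.coe_mul]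
    have : sInf S * α⁻¹ < 1 := by
      rw [← div_eq_mul_inv, div_lt_one hα]
      exact lt_of_le_of_lt (csInf_le hbdd hβS) hβ3
    exact_mod_cast this
  · intro h
    rw [hDQ] at h
    by_cases hSne : S.Nonempty
    · rw [if_pos hSne, ← EReal.coe_mul] at h
      have h' : sInf S * α⁻¹ < 1 := by exact_mod_cast h
      have hlt : sInf S < α := by
        rw [← div_eq_mul_inv, div_lt_one hα] at h'
        exact h'
      obtain ⟨β, hβS, hβα⟩ := exists_lt_of_csInf_lt hSne hlt
      exact lt_of_lt_of_le (hnf β hβS.1 hβα) hβS.2.2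
    · exfalso
      rw [if_neg hSne] at h
      induction αbar with
      | bot => exact absurd hαbar (by simp)
      | coe a =>
        have haα : α < a := by exact_mod_cast hαI
        rw [← EReal.coe_mul] at h
        have h' : a * α⁻¹ < 1 := by exact_mod_cast h
        rw [← div_eq_mul_inv, div_lt_one hα] at h'
        exact absurd h' (not_lt.2 (le_of_lt haα))
      | top =>
        rw [EReal.top_mul_coe_of_pos (by positivity)] at h
        exact absurd h (by simp)
end

section
/- Let ρ = (ρ_α)_{α∈I} be a family of risk measures on a convex cone X of random variables containing all constants, with ρ_α(X) decreasing in α, let α ∈ I, and let X = (λ_1 X, …, λ_n X) for some X ∈ X and λ_1,…,λ_n ≥ 0. Assume ρ is left continuous and non-flat from the left at (α, λ_1 X + ⋯ + λ_n X), and that ρ_α satisfies positive homogeneity [PH]: ρ_α(λY) = λρ_α(Y) for all λ > 0 and Y ∈ X. Then DQ^ρ_α(X) = 1. -/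
open MeasureTheory Filter

/-- a portfolio relying on a single asset has `DQ^ρ_α = 1` when `ρ_α`
is positively homogeneous (Theorem on interpreting DQ, part (iii)). -/
theorem stmt_7 {Ω : Type*} (𝒳 : Set (Ω → ℝ))
    (hadd : ∀ X ∈ 𝒳, ∀ Y ∈ 𝒳, X + Y ∈ 𝒳)
    (hsmul : ∀ X ∈ 𝒳, ∀ c : ℝ, 0 < c → c • X ∈ 𝒳)
    (hconst : ∀ c : ℝ, (fun _ : Ω => c) ∈ 𝒳)
    (αbar : EReal) (hαbar : 0 < αbar)
    (ρ : ℝ → (Ω → ℝ) → ℝ)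
    (hdec : ∀ Y ∈ 𝒳, ∀ β γ : ℝ, 0 < β → (β : EReal) < αbar → 0 < γ → (γ : EReal) < αbar →
      β ≤ γ → ρ γ Y ≤ ρ β Y)
    (α : ℝ) (hα : 0 < α) (hαI : (α : EReal) < αbar)
    (n : ℕ) (hn : 0 < n)
    (Z : Ω → ℝ) (hZ : Z ∈ 𝒳) (l : Fin n → ℝ) (hl : ∀ i, 0 ≤ l i)
    (X : Fin n → Ω → ℝ) (hXdef : ∀ i, X i = l i • Z)
    (hlc : Tendsto (fun β => ρ β (fun ω => ∑ i, X i ω)) (nhdsWithin α (Set.Iio α))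
      (nhds (ρ α (fun ω => ∑ i, X i ω))))
    (hnf : ∀ β : ℝ, 0 < β → β < α →
      ρ α (fun ω => ∑ i, X i ω) < ρ β (fun ω => ∑ i, X i ω))
    (hPHα : ∀ Y ∈ 𝒳, ∀ c : ℝ, 0 < c → ρ α (c • Y) = c * ρ α Y) :
    DQ αbar ρ α X = 1 := by
  classical
  set Y : Ω → ℝ := fun ω => ∑ i, X i ω with hY
  have hzero : ρ α (fun _ : Ω => (0:ℝ)) = 0 := by
    have h := hPHα (fun _ : Ω => (0:ℝ)) (hconst 0) 2 (by norm_num)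
    have h2 : (2:ℝ) • (fun _ : Ω => (0:ℝ)) = fun _ : Ω => (0:ℝ) := by
      funext ω; simp
    rw [h2] at h; linarith
  have hYsmul : Y = (∑ i, l i) • Z := by
    funext ω
    simp only [hY, hXdef, Pi.smul_apply, smul_eq_mul]
    rw [Finset.sum_mul]
  have hρX : ∀ i, ρ α (X i) = l i * ρ α Z := by
    intro i
    rcases lt_or_eq_of_le (hl i) with h | h
    · rw [hXdef i, hPHα Z hZ (l i) h]
    · have : X i = fun _ : Ω => (0:ℝ) := by
        funext ω; simp [hXdef i, ← h]
      rw [this, hzero, ← h, zero_mul]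
  have hsum : ∑ i, ρ α (X i) = ρ α Y := by
    have hL : (0:ℝ) ≤ ∑ i, l i := Finset.sum_nonneg fun i _ => hl i
    rcases lt_or_eq_of_le hL with h | h
    · rw [hYsmul, hPHα Z hZ _ h]
      simp [hρX, Finset.sum_mul]
    · have hz : Y = fun _ : Ω => (0:ℝ) := by
        funext ω; simp [hYsmul, ← h]
      rw [hz, hzero]
      simp [hρX, ← Finset.sum_mul, ← h]
  set S : Set ℝ := {β : ℝ | 0 < β ∧ (β : EReal) < αbar ∧ ρ β Y ≤ ∑ i, ρ α (X i)} with hS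
  have hαS : α ∈ S := ⟨hα, hαI, hsum.ge⟩
  have hlb : ∀ β ∈ S, α ≤ β := by
    intro β hβ
    by_contra hcon
    push_neg at hcon
    have := hnf β hβ.1 hcon
    have h2 := hβ.2.2
    rw [hsum] at h2
    exact absurd h2 (not_le.mpr this)
  have hinf : sInf S = α :=
    le_antisymm (csInf_le ⟨α, hlb⟩ hαS) (le_csInf ⟨α, hαS⟩ hlb)
  unfold DQ
  rw [if_pos ⟨α, hαS⟩]
  show ((sInf S : ℝ) : EReal) * _ = 1
  rw [hinf, ← EReal.coe_mul, mul_inv_cancel₀ (ne_of_gt hα)]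
  rfl
end

section
/- Let ρ = (ρ_α)_{α∈I} be a family of risk measures on a convex cone X of random variables containing all constants, with ρ_α(X) decreasing in α, let α ∈ I, and let X = (X_1,…,X_n) ∈ X^n be comonotonic. Assume ρ is left continuous and non-flat from the left at (α, X_1+⋯+X_n), and that ρ_α is comonotonic-additive. Then DQ^ρ_α(X) = 1. -/
open MeasureTheory Filter

/-- a comonotonic portfolio has `DQ^ρ_α = 1` when `ρ_α` is
comonotonic-additive (Theorem on interpreting DQ, part (iv)). -/
theorem stmt_8 {Ω : Type*} [MeasurableSpace Ω] (μ : Measure Ω) [IsProbabilityMeasure μ]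
    (hatomless : ∀ s : Set Ω, MeasurableSet s → 0 < μ s →
      ∃ t, t ⊆ s ∧ MeasurableSet t ∧ 0 < μ t ∧ μ t < μ s)
    (𝒳 : Set (Ω → ℝ))
    (hadd : ∀ X ∈ 𝒳, ∀ Y ∈ 𝒳, X + Y ∈ 𝒳)
    (hsmul : ∀ X ∈ 𝒳, ∀ c : ℝ, 0 < c → c • X ∈ 𝒳)
    (hconst : ∀ c : ℝ, (fun _ : Ω => c) ∈ 𝒳)
    (αbar : EReal) (hαbar : 0 < αbar)
    (ρ : ℝ → (Ω → ℝ) → ℝ)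
    (hdec : ∀ Y ∈ 𝒳, ∀ β γ : ℝ, 0 < β → (β : EReal) < αbar → 0 < γ → (γ : EReal) < αbar →
      β ≤ γ → ρ γ Y ≤ ρ β Y)
    (α : ℝ) (hα : 0 < α) (hαI : (α : EReal) < αbar)
    (n : ℕ) (hn : 0 < n) (X : Fin n → Ω → ℝ) (hX : ∀ i, X i ∈ 𝒳)
    -- `X` is comonotonic
    (hcom : ∃ (Z : Ω → ℝ) (f : Fin n → ℝ → ℝ), (∀ i, Monotone (f i)) ∧
      ∀ i, X i =ᵐ[μ] fun ω => f i (Z ω))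
    -- `ρ_α` is comonotonic-additive
    (hca : ∀ U ∈ 𝒳, ∀ V ∈ 𝒳,
      (∃ (Z : Ω → ℝ) (g h : ℝ → ℝ), Monotone g ∧ Monotone h ∧
        U =ᵐ[μ] (fun ω => g (Z ω)) ∧ V =ᵐ[μ] (fun ω => h (Z ω))) →
      ρ α (U + V) = ρ α U + ρ α V)
    (hlc : Tendsto (fun β => ρ β (fun ω => ∑ i, X i ω)) (nhdsWithin α (Set.Iio α))
      (nhds (ρ α (fun ω => ∑ i, X i ω))))
    (hnf : ∀ β : ℝ, 0 < β → β < α →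
      ρ α (fun ω => ∑ i, X i ω) < ρ β (fun ω => ∑ i, X i ω)) :
    DQ αbar ρ α X = 1 := by
  haveI : Nonempty (Fin n) := Fin.pos_iff_nonempty.mp hn
  obtain ⟨Z, f, hfmono, hfae⟩ := hcom
  have hae : ∀ᵐ ω ∂μ, ∀ i, X i ω = f i (Z ω) := ae_all_iff.2 hfae
  -- main claim : additivity over nonempty finsets
  have key : ∀ s : Finset (Fin n), s.Nonempty →
      (fun ω => ∑ i ∈ s, X i ω) ∈ 𝒳 ∧
      ρ α (fun ω => ∑ i ∈ s, X i ω) = ∑ i ∈ s, ρ α (X i) := by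
    intro s hs
    induction s using Finset.cons_induction with
    | empty => exact absurd hs (by simp)
    | cons i s hi ih =>
      rcases s.eq_empty_or_nonempty with rfl | hsne
      · simp only [Finset.cons_empty, Finset.sum_singleton]
        exact ⟨hX i, trivial⟩
      · obtain ⟨hmem, heq⟩ := ih hsne
        have hfun : (fun ω => ∑ j ∈ Finset.cons i s hi, X j ω)
            = X i + fun ω => ∑ j ∈ s, X j ω := by
          funext ω; rw [Finset.sum_cons]; rfl
        have hcomon : ∃ (Z' : Ω → ℝ) (g h : ℝ → ℝ), Monotone g ∧ Monotone h ∧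
            (X i) =ᵐ[μ] (fun ω => g (Z' ω)) ∧
            (fun ω => ∑ j ∈ s, X j ω) =ᵐ[μ] (fun ω => h (Z' ω)) :=
          ⟨Z, f i, fun z => ∑ j ∈ s, f j z, hfmono i,
            fun a b hab => Finset.sum_le_sum fun j _ => hfmono j hab,
            hfae i,
            hae.mono fun ω hω => Finset.sum_congr rfl fun j _ => hω j⟩
        have hsum := hca (X i) (hX i) _ hmem hcomon
        refine ⟨?_, ?_⟩
        · rw [hfun]; exact hadd _ (hX i) _ hmem
        · rw [hfun, hsum, heq, Finset.sum_cons]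
  obtain ⟨hmemS, hkey⟩ := key Finset.univ Finset.univ_nonempty
  set A : Set ℝ := {β : ℝ | 0 < β ∧ (β : EReal) < αbar ∧
      ρ β (fun ω => ∑ i, X i ω) ≤ ∑ i, ρ α (X i)} with hA
  have hαA : α ∈ A := ⟨hα, hαI, le_of_eq hkey⟩
  have hne : A.Nonempty := ⟨α, hαA⟩
  have hlb : ∀ β ∈ A, α ≤ β := by
    intro β hβ
    by_contra hlt
    push_neg at hlt
    have h1 := hnf β hβ.1 hlt
    have h2 := hβ.2.2
    rw [← hkey] at h2
    linarith
  have hsInf : sInf A = α :=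
    le_antisymm (csInf_le ⟨α, fun b hb => hlb b hb⟩ hαA) (le_csInf hne hlb)
  rw [DQ, if_pos hne, hsInf, ← EReal.coe_mul, mul_inv_cancel₀ (ne_of_gt hα),
    EReal.coe_one]
end

section
/- Let ρ = (ρ_α)_{α∈I} be a family of SSD-consistent risk measures on a convex cone X of random variables containing all constants, with ρ_α(X) decreasing in α. For X, Y ∈ X^n and α ∈ I, if ρ_α(X_1)+⋯+ρ_α(X_n) ≤ ρ_α(Y_1)+⋯+ρ_α(Y_n) and X_1+⋯+X_n ≤_SSD Y_1+⋯+Y_n, then DQ^ρ_α(X) ≥ DQ^ρ_α(Y). -/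
open MeasureTheory Filter

/-- Second-order stochastic dominance: `U ≤_SSD V` iff `E[f(U)] ≤ E[f(V)]` for all
decreasing concave `f` for which the expectations exist. -/
def SSDle {Ω : Type*} [MeasurableSpace Ω] (μ : MeasureTheory.Measure Ω) (U V : Ω → ℝ) : Prop :=
  ∀ f : ℝ → ℝ, Antitone f → ConcaveOn ℝ Set.univ f →
    MeasureTheory.Integrable (fun ω => f (U ω)) μ →
    MeasureTheory.Integrable (fun ω => f (V ω)) μ →
    ∫ ω, f (U ω) ∂μ ≤ ∫ ω, f (V ω) ∂μ

/-- DQ built from SSD-consistent risk measures is monotone with respect to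
second-order stochastic dominance of the total risk. -/
theorem stmt_9 {Ω : Type*} [MeasurableSpace Ω] (μ : Measure Ω) [IsProbabilityMeasure μ]
    (hatomless : ∀ s : Set Ω, MeasurableSet s → 0 < μ s →
      ∃ t, t ⊆ s ∧ MeasurableSet t ∧ 0 < μ t ∧ μ t < μ s)
    (𝒳 : Set (Ω → ℝ))
    (hadd : ∀ X ∈ 𝒳, ∀ Y ∈ 𝒳, X + Y ∈ 𝒳)
    (hsmul : ∀ X ∈ 𝒳, ∀ c : ℝ, 0 < c → c • X ∈ 𝒳)
    (hconst : ∀ c : ℝ, (fun _ : Ω => c) ∈ 𝒳)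
    (αbar : EReal) (hαbar : 0 < αbar)
    (ρ : ℝ → (Ω → ℝ) → ℝ)
    (hdec : ∀ Y ∈ 𝒳, ∀ β γ : ℝ, 0 < β → (β : EReal) < αbar → 0 < γ → (γ : EReal) < αbar →
      β ≤ γ → ρ γ Y ≤ ρ β Y)
    -- every member of the family is SSD-consistent
    (hssd : ∀ β : ℝ, 0 < β → (β : EReal) < αbar → ∀ U ∈ 𝒳, ∀ V ∈ 𝒳,
      SSDle μ U V → ρ β V ≤ ρ β U)
    (α : ℝ) (hα : 0 < α) (hαI : (α : EReal) < αbar)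
    (n : ℕ) (hn : 0 < n)
    (X Y : Fin n → Ω → ℝ) (hX : ∀ i, X i ∈ 𝒳) (hY : ∀ i, Y i ∈ 𝒳)
    (hsum : ∑ i, ρ α (X i) ≤ ∑ i, ρ α (Y i))
    (hdom : SSDle μ (fun ω => ∑ i, X i ω) (fun ω => ∑ i, Y i ω)) :
    DQ αbar ρ α Y ≤ DQ αbar ρ α X := by
  classical
  -- sums belong to 𝒳
  have hsum𝒳 : ∀ Z : Fin n → Ω → ℝ, (∀ i, Z i ∈ 𝒳) → (fun ω => ∑ i, Z i ω) ∈ 𝒳 := by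
    intro Z hZ
    have : ∀ s : Finset (Fin n), (fun ω => ∑ i ∈ s, Z i ω) ∈ 𝒳 := by
      intro s
      induction s using Finset.induction with
      | empty => simpa using hconst 0
      | insert a s' hmem ih =>
        have := hadd _ (hZ a) _ ih
        simpa [Finset.sum_insert hmem, Pi.add_def] using this
    exact this Finset.univ
  have hXS := hsum𝒳 X hX
  have hYS := hsum𝒳 Y hY
  set SX := {β : ℝ | 0 < β ∧ (β : EReal) < αbar ∧
      ρ β (fun ω => ∑ i, X i ω) ≤ ∑ i, ρ α (X i)} with hSX
  set SY := {β : ℝ | 0 < β ∧ (β : EReal) < αbar ∧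
      ρ β (fun ω => ∑ i, Y i ω) ≤ ∑ i, ρ α (Y i)} with hSY
  have hsub : SX ⊆ SY := by
    intro β hβ
    obtain ⟨hβ0, hβbar, hβρ⟩ := hβ
    refine ⟨hβ0, hβbar, ?_⟩
    have h1 : ρ β (fun ω => ∑ i, Y i ω) ≤ ρ β (fun ω => ∑ i, X i ω) :=
      hssd β hβ0 hβbar _ hXS _ hYS hdom
    linarith
  have hαinv : (0 : EReal) ≤ ((α⁻¹ : ℝ) : EReal) := by
    exact_mod_cast inv_nonneg.2 hα.le
  have hbddY : BddBelow SY := ⟨0, fun b hb => hb.1.le⟩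
  unfold DQ
  by_cases hne : SX.Nonempty
  · have hneY : SY.Nonempty := hne.mono hsub
    rw [if_pos hne, if_pos hneY]
    refine mul_le_mul_of_nonneg_right ?_ hαinv
    exact_mod_cast csInf_le_csInf hbddY hne hsub
  · rw [if_neg hne]
    by_cases hneY : SY.Nonempty
    · rw [if_pos hneY]
      refine mul_le_mul_of_nonneg_right ?_ hαinv
      obtain ⟨β, hβ⟩ := hneY
      calc ((sInf SY : ℝ) : EReal) ≤ (β : EReal) := by
            exact_mod_cast csInf_le hbddY hβ
        _ ≤ αbar := hβ.2.1.le
    · rw [if_neg hneY]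
end

section
/- Let ρ = (ρ_α)_{α∈I} be a family of risk measures on a convex cone X of random variables containing all constants, with ρ_α(X) decreasing in α, and let α ∈ I. (i) If there exists m ∈ ℝ such that every ρ_β, β ∈ I, satisfies [CA]_m (ρ_β(X+c) = ρ_β(X)+mc for all c ∈ ℝ), and ρ_α(0) = 0, then DQ^ρ_α satisfies riskless invariance [RI]: DQ^ρ_α(X_1,…,X_n,c) = DQ^ρ_α(X_1,…,X_n) for all (X_1,…,X_n) ∈ X^n and c ∈ ℝ. (ii) If every ρ_β, β ∈ I, satisfies positive homogeneity [PH] (ρ_β(λX) = λρ_β(X) for all λ > 0), then DQ^ρ_α satisfies replication consistency [RC]: DQ^ρ_α(X_1,…,X_n,X_1,…,X_n) = DQ^ρ_α(X_1,…,X_n) for all (X_1,…,X_n) ∈ X^n. -/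
open MeasureTheory Filter

lemma sum_mem_cone {Ω : Type*} (𝒳 : Set (Ω → ℝ))
    (hadd : ∀ X ∈ 𝒳, ∀ Y ∈ 𝒳, X + Y ∈ 𝒳) :
    ∀ (n : ℕ), 0 < n → ∀ (X : Fin n → Ω → ℝ), (∀ i, X i ∈ 𝒳) →
      (fun ω => ∑ i, X i ω) ∈ 𝒳 := by
  intro n
  induction n with
  | zero => intro h; exact absurd h (lt_irrefl 0)
  | succ n ih =>
    intro _ X hX
    rcases Nat.eq_zero_or_pos n with hn | hn
    · subst hn
      have : (fun ω => ∑ i, X i ω) = X 0 := by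
        funext ω; simp
      rw [this]; exact hX 0
    · have : (fun ω => ∑ i, X i ω) = X 0 + fun ω => ∑ i : Fin n, X i.succ ω := by
        funext ω; simp [Fin.sum_univ_succ]
      rw [this]
      exact hadd _ (hX 0) _ (ih hn _ (fun i => hX i.succ))


/-- (i) riskless invariance [RI] of DQ under [CA]_m with `ρ_α(0)=0`;
(ii) replication consistency [RC] of DQ under [PH]. -/
theorem stmt_10 {Ω : Type*} (𝒳 : Set (Ω → ℝ))
    (hadd : ∀ X ∈ 𝒳, ∀ Y ∈ 𝒳, X + Y ∈ 𝒳)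
    (hsmul : ∀ X ∈ 𝒳, ∀ c : ℝ, 0 < c → c • X ∈ 𝒳)
    (hconst : ∀ c : ℝ, (fun _ : Ω => c) ∈ 𝒳)
    (αbar : EReal) (hαbar : 0 < αbar)
    (ρ : ℝ → (Ω → ℝ) → ℝ)
    (hdec : ∀ Y ∈ 𝒳, ∀ β γ : ℝ, 0 < β → (β : EReal) < αbar → 0 < γ → (γ : EReal) < αbar →
      β ≤ γ → ρ γ Y ≤ ρ β Y)
    (α : ℝ) (hα : 0 < α) (hαI : (α : EReal) < αbar) :
    -- (i) [RI]
    (∀ m : ℝ,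
      (∀ β : ℝ, 0 < β → (β : EReal) < αbar → ∀ Y ∈ 𝒳, ∀ c : ℝ,
        ρ β (Y + (fun _ => c)) = ρ β Y + m * c) →
      ρ α (fun _ => (0 : ℝ)) = 0 →
      ∀ (n : ℕ), 0 < n → ∀ (X : Fin n → Ω → ℝ), (∀ i, X i ∈ 𝒳) → ∀ c : ℝ,
        DQ αbar ρ α (Fin.snoc X (fun _ => c)) = DQ αbar ρ α X)
    -- (ii) [RC]
    ∧ ((∀ β : ℝ, 0 < β → (β : EReal) < αbar → ∀ Y ∈ 𝒳, ∀ l : ℝ, 0 < l →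
        ρ β (l • Y) = l * ρ β Y) →
      ∀ (n : ℕ), 0 < n → ∀ (X : Fin n → Ω → ℝ), (∀ i, X i ∈ 𝒳) →
        DQ αbar ρ α (Fin.append X X) = DQ αbar ρ α X) := by
  constructor
  · -- (i)
    intro m hCA h0 n hn X hX c
    have hS : (fun ω => ∑ i, X i ω) ∈ 𝒳 := sum_mem_cone 𝒳 hadd n hn X hX
    have hρc : ρ α (fun _ : Ω => c) = m * c := by
      have h1 := hCA α hα hαI (fun _ : Ω => (0 : ℝ)) (hconst 0) c
      have h2 : (fun _ : Ω => (0 : ℝ)) + (fun _ : Ω => c) = fun _ : Ω => c := by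
        funext ω; simp
      rw [h2, h0, zero_add] at h1
      exact h1
    have hsum : (fun ω => ∑ i, (Fin.snoc X (fun _ => c) : Fin (n + 1) → Ω → ℝ) i ω)
        = (fun ω => ∑ i, X i ω) + (fun _ : Ω => c) := by
      funext ω; simp [Fin.sum_univ_castSucc]
    have hrhs : ∑ i : Fin (n + 1), ρ α ((Fin.snoc X (fun _ => c) : Fin (n + 1) → Ω → ℝ) i)
        = ∑ i, ρ α (X i) + m * c := by
      simp [Fin.sum_univ_castSucc, hρc]
    have hset : {β : ℝ | 0 < β ∧ (β : EReal) < αbar ∧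
        ρ β (fun ω => ∑ i, (Fin.snoc X (fun _ => c) : Fin (n + 1) → Ω → ℝ) i ω)
          ≤ ∑ i, ρ α ((Fin.snoc X (fun _ => c) : Fin (n + 1) → Ω → ℝ) i)}
        = {β : ℝ | 0 < β ∧ (β : EReal) < αbar ∧
        ρ β (fun ω => ∑ i, X i ω) ≤ ∑ i, ρ α (X i)} := by
      ext β
      simp only [Set.mem_setOf_eq, and_congr_right_iff]
      intro hβ hβ'
      rw [hsum, hrhs, hCA β hβ hβ' _ hS c]
      exact add_le_add_iff_right (m * c)
    unfold DQ
    rw [hset]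
  · -- (ii)
    intro hPH n hn X hX
    have hS : (fun ω => ∑ i, X i ω) ∈ 𝒳 := sum_mem_cone 𝒳 hadd n hn X hX
    have hR : ∀ i : Fin n, Fin.append X X (i.addNat n) = X i := by
      intro i
      have h : i.addNat n = Fin.natAdd n i := by ext; simp [Nat.add_comm]
      rw [h, Fin.append_right]
    have hsum : (fun ω => ∑ i, Fin.append X X i ω)
        = (2 : ℝ) • fun ω => ∑ i, X i ω := by
      funext ω
      simp [Fin.sum_univ_add, hR, two_mul]
    have hrhs : ∑ i, ρ α (Fin.append X X i) = 2 * ∑ i, ρ α (X i) := by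
      simp [Fin.sum_univ_add, hR, two_mul]
    have hset : {β : ℝ | 0 < β ∧ (β : EReal) < αbar ∧
        ρ β (fun ω => ∑ i, Fin.append X X i ω) ≤ ∑ i, ρ α (Fin.append X X i)}
        = {β : ℝ | 0 < β ∧ (β : EReal) < αbar ∧
        ρ β (fun ω => ∑ i, X i ω) ≤ ∑ i, ρ α (X i)} := by
      ext β
      simp only [Set.mem_setOf_eq, and_congr_right_iff]
      intro hβ hβ'
      rw [hsum, hrhs, hPH β hβ hβ' _ hS 2 (by norm_num)]
      exact mul_le_mul_iff_right₀ (by norm_num)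
    unfold DQ
    rw [hset]
end

section
/- For every α ∈ (0,1) and every X = (X_1,…,X_n) ∈ (L^0)^n, the diversification quotient based on the VaR family satisfies DQ^VaR_α(X) = (1/α) · P(X_1+⋯+X_n > VaR_α(X_1)+⋯+VaR_α(X_n)). -/
open MeasureTheory Filter

/-- Value-at-Risk at level `α` (small-`α` convention):
`VaR_α(X) = inf {x : P(X ≤ x) ≥ 1 - α}`. -/
noncomputable def VaR {Ω : Type*} [MeasurableSpace Ω] (μ : MeasureTheory.Measure Ω)
    (α : ℝ) (X : Ω → ℝ) : ℝ :=
  sInf {x : ℝ | ENNReal.ofReal (1 - α) ≤ μ {ω | X ω ≤ x}}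

open Set in
open scoped Topology in
lemma VaR_le_iff' {Ω : Type*} [MeasurableSpace Ω] (μ : Measure Ω) [IsProbabilityMeasure μ]
    {S : Ω → ℝ} (hS : Measurable S) {β c : ℝ} (hβ0 : 0 < β) (hβ1 : β < 1) :
    VaR μ β S ≤ c ↔ ENNReal.ofReal (1 - β) ≤ μ {ω | S ω ≤ c} := by
  set T : Set ℝ := {x : ℝ | ENNReal.ofReal (1 - β) ≤ μ {ω | S ω ≤ x}} with hT
  have hmeas : ∀ x : ℝ, MeasurableSet {ω | S ω ≤ x} := fun x => hS measurableSet_Iic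
  have hmono : ∀ x y : ℝ, x ≤ y → x ∈ T → y ∈ T := fun x y hxy hx =>
    le_trans hx (measure_mono fun ω (h : S ω ≤ x) => h.trans hxy)
  have hpos : (0 : ENNReal) < ENNReal.ofReal (1 - β) := ENNReal.ofReal_pos.2 (by linarith)
  -- bounded below
  have h0 : Tendsto (fun x : ℝ => μ {ω | S ω ≤ x}) atBot (𝓝 0) := by
    have hI : (⋂ x : ℝ, {ω | S ω ≤ x}) = (∅ : Set Ω) := by
      ext ω; simp only [Set.mem_iInter, Set.mem_setOf_eq, Set.mem_empty_iff_false, iff_false,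
        not_forall]
      exact ⟨S ω - 1, by push_neg; linarith⟩
    have h := tendsto_measure_iInter_atBot (μ := μ) (s := fun x : ℝ => {ω | S ω ≤ x})
      (fun x => (hmeas x).nullMeasurableSet)
      (fun x y hxy ω (h : S ω ≤ x) => h.trans hxy) ⟨0, measure_ne_top _ _⟩
    rw [hI, measure_empty] at h
    exact h
  obtain ⟨x0, hx0⟩ : ∃ x0 : ℝ, μ {ω | S ω ≤ x0} < ENNReal.ofReal (1 - β) :=
    (h0.eventually_lt_const hpos).exists
  have hbdd : BddBelow T := by
    refine ⟨x0, fun y hy => ?_⟩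
    by_contra hlt
    push_neg at hlt
    exact absurd (hmono y x0 hlt.le hy) (not_le.2 hx0)
  -- nonempty
  have h1 : Tendsto (fun x : ℝ => μ {ω | S ω ≤ x}) atTop (𝓝 1) := by
    have hU : (⋃ x : ℝ, {ω | S ω ≤ x}) = (Set.univ : Set Ω) := by
      ext ω; simp only [Set.mem_iUnion, Set.mem_setOf_eq, Set.mem_univ, iff_true]
      exact ⟨S ω, le_rfl⟩
    have h := tendsto_measure_iUnion_atTop (μ := μ) (s := fun x : ℝ => {ω | S ω ≤ x})
      (fun x y hxy ω (h : S ω ≤ x) => h.trans hxy)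
    rw [hU, measure_univ] at h
    exact h
  have hne : T.Nonempty := by
    have hlt1 : ENNReal.ofReal (1 - β) < 1 := by
      rw [ENNReal.ofReal_lt_one]; linarith
    obtain ⟨x1, hx1⟩ := (h1.eventually_const_lt hlt1).exists
    exact ⟨x1, hx1.le⟩
  constructor
  · intro hv
    have key : ∀ k : ℕ, ENNReal.ofReal (1 - β) ≤ μ {ω | S ω ≤ c + 1 / (k + 1)} := by
      intro k
      have hk0 : (0:ℝ) < 1 / ((k:ℝ) + 1) := by positivity
      have hck : VaR μ β S < c + 1 / (k + 1) := by
        unfold VaR at hv ⊢; push_cast; linarith [hv]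
      obtain ⟨t, ht, htlt⟩ := exists_lt_of_csInf_lt hne hck
      exact hmono t _ htlt.le ht
    have hInt : (⋂ k : ℕ, {ω | S ω ≤ c + 1 / (k + 1)}) = {ω | S ω ≤ c} := by
      ext ω
      simp only [Set.mem_iInter, Set.mem_setOf_eq]
      constructor
      · intro h
        by_contra hc
        push_neg at hc
        obtain ⟨k, hk⟩ := exists_nat_gt (1 / (S ω - c))
        have hsc : (0:ℝ) < S ω - c := by linarith
        have hk0 : (0:ℝ) < 1 / (S ω - c) := by positivity
        have : 1 / ((k:ℝ) + 1) < S ω - c := by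
          rw [div_lt_iff₀ (by positivity)]
          rw [div_lt_iff₀ hsc] at hk
          nlinarith
        linarith [h k]
      · intro h k
        have : (0:ℝ) < 1 / ((k:ℝ)+1) := by positivity
        linarith
    have hanti : Antitone (fun k : ℕ => {ω | S ω ≤ c + 1 / ((k:ℝ) + 1)}) := by
      intro k m hkm ω (h : S ω ≤ c + 1 / ((m:ℝ)+1))
      have h1m : 1 / ((m:ℝ)+1) ≤ 1 / ((k:ℝ)+1) := by
        apply one_div_le_one_div_of_le (by positivity)
        have : (k:ℝ) ≤ m := Nat.cast_le.2 hkm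
        linarith
      show S ω ≤ c + 1 / ((k:ℝ)+1)
      linarith
    have htend : Tendsto (fun k : ℕ => μ {ω | S ω ≤ c + 1 / (k + 1)}) atTop
        (𝓝 (μ {ω | S ω ≤ c})) := by
      have h := tendsto_measure_iInter_atTop (μ := μ)
        (s := fun k : ℕ => {ω | S ω ≤ c + 1 / ((k:ℝ) + 1)})
        (fun k => (hmeas _).nullMeasurableSet) hanti ⟨0, measure_ne_top _ _⟩
      rw [hInt] at h
      exact h
    exact ge_of_tendsto' htend key
  · intro hc
    exact csInf_le hbdd hc

/-- alternative formula for `DQ^VaR_α`: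
`DQ^VaR_α(X) = (1/α) P(∑ X_i > ∑ VaR_α(X_i))`. -/
theorem stmt_11 {Ω : Type*} [MeasurableSpace Ω] (μ : Measure Ω) [IsProbabilityMeasure μ]
    (hatomless : ∀ s : Set Ω, MeasurableSet s → 0 < μ s →
      ∃ t, t ⊆ s ∧ MeasurableSet t ∧ 0 < μ t ∧ μ t < μ s)
    (n : ℕ) (hn : 0 < n)
    (α : ℝ) (hα0 : 0 < α) (hα1 : α < 1)
    (X : Fin n → Ω → ℝ) (hX : ∀ i, Measurable (X i)) :
    DQ 1 (fun β => VaR μ β) α X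
      = ((α⁻¹ * (μ {ω | ∑ i, VaR μ α (X i) < ∑ i, X i ω}).toReal : ℝ) : EReal) := by
  set S : Ω → ℝ := fun ω => ∑ i, X i ω with hSdef
  have hSm : Measurable S := Finset.measurable_sum Finset.univ fun i _ => hX i
  set c : ℝ := ∑ i, VaR μ α (X i) with hcdef
  set p : ℝ := (μ {ω | c < S ω}).toReal with hpdef
  have hp0 : 0 ≤ p := ENNReal.toReal_nonneg
  have hcompl : {ω | c < S ω} = {ω | S ω ≤ c}ᶜ := by
    ext ω; simp [not_le]
  have hsum : (μ {ω | S ω ≤ c}).toReal + p = 1 := by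
    rw [hpdef, hcompl, ← ENNReal.toReal_add (measure_ne_top _ _) (measure_ne_top _ _),
      measure_add_measure_compl (μ := μ) (s := {ω | S ω ≤ c}) (hSm measurableSet_Iic),
      measure_univ, ENNReal.toReal_one]
  have hp1 : p ≤ 1 := by
    have := ENNReal.toReal_nonneg (a := μ {ω | S ω ≤ c})
    linarith
  have hiff : ∀ β : ℝ, 0 < β → β < 1 →
      (VaR μ β S ≤ c ↔ p ≤ β) := by
    intro β hb0 hb1
    rw [VaR_le_iff' μ hSm hb0 hb1,
      ENNReal.ofReal_le_iff_le_toReal (measure_ne_top _ _)]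
    constructor <;> intro h <;> linarith
  have hset : {β : ℝ | 0 < β ∧ (β : EReal) < (1:EReal) ∧
        VaR μ β (fun ω => ∑ i, X i ω) ≤ ∑ i, VaR μ α (X i)}
      = {β : ℝ | 0 < β ∧ β < 1 ∧ p ≤ β} := by
    ext β
    simp only [Set.mem_setOf_eq]
    have h1 : ((β : ℝ) : EReal) < (1:EReal) ↔ β < 1 := by
      rw [show (1:EReal) = ((1:ℝ):EReal) from rfl, EReal.coe_lt_coe_iff]
    constructor
    · rintro ⟨hb0, hb1, hb2⟩
      exact ⟨hb0, h1.1 hb1, (hiff β hb0 (h1.1 hb1)).1 hb2⟩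
    · rintro ⟨hb0, hb1, hb2⟩
      exact ⟨hb0, h1.2 hb1, (hiff β hb0 hb1).2 hb2⟩
  unfold DQ
  rw [hset]
  by_cases hplt : p < 1
  · have hne : ({β : ℝ | 0 < β ∧ β < 1 ∧ p ≤ β}).Nonempty := by
      refine ⟨(p + 1) / 2, by linarith, by linarith, by linarith⟩
    rw [if_pos hne]
    have hbdd : BddBelow {β : ℝ | 0 < β ∧ β < 1 ∧ p ≤ β} :=
      ⟨0, fun β hβ => hβ.1.le⟩
    have hinf : sInf {β : ℝ | 0 < β ∧ β < 1 ∧ p ≤ β} = p := by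
      apply le_antisymm
      · apply le_of_forall_pos_le_add
        intro ε hε
        have hmem : min ((p + 1) / 2) (p + ε / 2) ∈ {β : ℝ | 0 < β ∧ β < 1 ∧ p ≤ β} := by
          refine ⟨lt_min (by linarith) (by linarith), ?_, le_min (by linarith) (by linarith)⟩
          exact lt_of_le_of_lt (min_le_left _ _) (by linarith)
        calc sInf {β : ℝ | 0 < β ∧ β < 1 ∧ p ≤ β} ≤ min ((p + 1) / 2) (p + ε / 2) :=
              csInf_le hbdd hmem
          _ ≤ p + ε / 2 := min_le_right _ _
          _ ≤ p + ε := by linarith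
      · exact le_csInf hne fun β hβ => hβ.2.2
    rw [hinf, ← EReal.coe_mul]
    norm_num [mul_comm]
  · have hpe : p = 1 := le_antisymm hp1 (not_lt.1 hplt)
    have hemp : ¬ ({β : ℝ | 0 < β ∧ β < 1 ∧ p ≤ β}).Nonempty := by
      rintro ⟨β, hb0, hb1, hb2⟩
      rw [hpe] at hb2; linarith
    rw [if_neg hemp, hpe, one_mul, mul_one]
end

section
/- Let α ∈ (0,1) and X = (X_1,…,X_n) ∈ (L^1)^n. If P(X_1+⋯+X_n > ES_α(X_1)+⋯+ES_α(X_n)) > 0, then DQ^ES_α(X) = (1/α) · min_{r∈(0,∞)} E[( r·∑_{i=1}^n (X_i − ES_α(X_i)) + 1 )_+], and the minimum over r ∈ (0,∞) is attained. If P(X_1+⋯+X_n > ES_α(X_1)+⋯+ES_α(X_n)) = 0, then DQ^ES_α(X) = 0. -/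
open MeasureTheory Filter

/-- Expected Shortfall at level `α`: `ES_α(X) = (1/α) ∫_0^α VaR_β(X) dβ`. -/
noncomputable def ES {Ω : Type*} [MeasurableSpace Ω] (μ : MeasureTheory.Measure Ω)
    (α : ℝ) (X : Ω → ℝ) : ℝ :=
  α⁻¹ * ∫ β in (0 : ℝ)..α, VaR μ β X


open Set ProbabilityTheory
open scoped ENNReal Topology

section Lemmas
set_option linter.unusedSectionVars false
set_option linter.unusedVariables false
variable {Ω : Type*} [MeasurableSpace Ω] {μ : Measure Ω} [IsProbabilityMeasure μ]
variable {Y : Ω → ℝ} {S : Ω → ℝ}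
variable {Ω : Type*} [MeasurableSpace Ω] {μ : Measure Ω} [IsProbabilityMeasure μ]
variable {Y : Ω → ℝ}

lemma meas_Iic (hY : AEMeasurable Y μ) (x : ℝ) :
    μ {ω | Y ω ≤ x} = ENNReal.ofReal (cdf (μ.map Y) x) := by
  haveI : IsProbabilityMeasure (μ.map Y) := Measure.isProbabilityMeasure_map hY
  rw [ofReal_cdf, Measure.map_apply_of_aemeasurable hY measurableSet_Iic]
  rfl

lemma meas_gt (hY : AEMeasurable Y μ) (x : ℝ) :
    μ {ω | x < Y ω} = ENNReal.ofReal (1 - cdf (μ.map Y) x) := by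
  haveI : IsProbabilityMeasure (μ.map Y) := Measure.isProbabilityMeasure_map hY
  have h1 : {ω | x < Y ω} = {ω | Y ω ≤ x}ᶜ := by ext ω; simp [not_le]
  have h2 : NullMeasurableSet {ω | Y ω ≤ x} μ :=
    nullMeasurableSet_le hY aemeasurable_const
  rw [h1, measure_compl₀ h2 (measure_ne_top μ _), meas_Iic hY,
    ENNReal.ofReal_sub _ (cdf_nonneg _ _)]
  · simp [measure_univ, ENNReal.ofReal_one]

lemma var_le_iff (hY : AEMeasurable Y μ) {β : ℝ} (hβ0 : 0 < β) (hβ1 : β < 1) (s : ℝ) :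
    VaR μ β Y ≤ s ↔ 1 - β ≤ cdf (μ.map Y) s := by
  haveI : IsProbabilityMeasure (μ.map Y) := Measure.isProbabilityMeasure_map hY
  set F : ℝ → ℝ := ⇑(cdf (μ.map Y)) with hF
  have hset : {x : ℝ | ENNReal.ofReal (1 - β) ≤ μ {ω | Y ω ≤ x}} = {x : ℝ | 1 - β ≤ F x} := by
    ext x
    rw [mem_setOf_eq, mem_setOf_eq, meas_Iic hY, ENNReal.ofReal_le_ofReal_iff (cdf_nonneg _ _)]
  have hne : {x : ℝ | 1 - β ≤ F x}.Nonempty := by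
    have : ∀ᶠ x in atTop, 1 - β < F x :=
      (tendsto_cdf_atTop (μ.map Y)).eventually (eventually_gt_nhds (by linarith))
    obtain ⟨x, hx⟩ := this.exists
    exact ⟨x, hx.le⟩
  have hbdd : BddBelow {x : ℝ | 1 - β ≤ F x} := by
    have : ∀ᶠ x in atBot, F x < 1 - β :=
      (tendsto_cdf_atBot (μ.map Y)).eventually (eventually_lt_nhds (by linarith))
    obtain ⟨x0, hx0⟩ := eventually_atBot.1 this
    refine ⟨x0, fun t ht => ?_⟩
    by_contra h
    push_neg at h
    have : F t ≤ F x0 := monotone_cdf _ h.le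
    have h2 := hx0 x0 le_rfl
    have h3 : (1:ℝ) - β ≤ F x0 := le_trans ht.out this
    linarith
  have hmem : sInf {x : ℝ | 1 - β ≤ F x} ∈ {x : ℝ | 1 - β ≤ F x} := by
    set a := sInf {x : ℝ | 1 - β ≤ F x} with ha
    have hev : ∀ᶠ x in nhdsWithin a (Ioi a), 1 - β ≤ F x := by
      filter_upwards [self_mem_nhdsWithin] with x hx
      obtain ⟨t, ht, htx⟩ := exists_lt_of_csInf_lt hne (show a < x from hx)
      exact le_trans ht.out (monotone_cdf _ htx.le)
    have hcont : Tendsto F (nhdsWithin a (Ioi a)) (nhds (F a)) :=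
      ((cdf (μ.map Y)).right_continuous a).mono_left (nhdsWithin_mono a Ioi_subset_Ici_self)
    exact ge_of_tendsto hcont hev
  constructor
  · intro h
    rw [VaR, hset] at h
    exact le_trans hmem.out (monotone_cdf _ h)
  · intro h
    rw [VaR, hset]
    exact csInf_le hbdd h

set_option linter.unusedSectionVars false
variable {Ω : Type*} [MeasurableSpace Ω] {μ : Measure Ω} [IsProbabilityMeasure μ]
variable {Y : Ω → ℝ}

lemma lt_var_iff (hY : AEMeasurable Y μ) {γ : ℝ} (hγ0 : 0 < γ) (hγ1 : γ < 1) (s : ℝ) :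
    s < VaR μ γ Y ↔ γ < 1 - cdf (μ.map Y) s := by
  rw [← not_le, ← not_le, var_le_iff hY hγ0 hγ1]
  constructor
  · intro h h2; exact h (by linarith)
  · intro h h2; exact h (by linarith)

lemma G_meas : Measurable (fun s : ℝ => 1 - cdf (μ.map Y) s) :=
  measurable_const.sub (monotone_cdf (μ.map Y)).measurable

/-- The key Fubini computation. -/
lemma lint_eq (hY : AEMeasurable Y μ) {β : ℝ} (hβ0 : 0 < β) (hβ1 : β < 1) (t : ℝ) :
    ∫⁻ γ in Ioo (0:ℝ) β, ENNReal.ofReal (VaR μ γ Y - t) =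
    ∫⁻ s in Ioi (0:ℝ), ENNReal.ofReal (min β (1 - cdf (μ.map Y) (t + s))) := by
  set G : ℝ → ℝ := fun s => 1 - cdf (μ.map Y) s with hG
  have hGmeas : Measurable G := G_meas
  have hsm : ∀ γ : ℝ, MeasurableSet {s : ℝ | γ < G (t + s)} :=
    fun γ => measurableSet_lt measurable_const (hGmeas.comp (measurable_const.add measurable_id))
  set W : ℝ → ℝ → ℝ≥0∞ := fun γ s => if γ < G (t + s) then 1 else 0 with hW
  have hWmeas : Measurable (Function.uncurry W) := by
    refine Measurable.ite ?_ measurable_const measurable_const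
    exact measurableSet_lt measurable_fst (hGmeas.comp (measurable_const.add measurable_snd))
  have step1 : ∀ γ ∈ Ioo (0:ℝ) β, ENNReal.ofReal (VaR μ γ Y - t)
      = ∫⁻ s in Ioi (0:ℝ), W γ s := by
    intro γ hγ
    have hchar : ∀ s : ℝ, (γ < G (t + s)) ↔ (t + s < VaR μ γ Y) :=
      fun s => (lt_var_iff hY hγ.1 (lt_trans hγ.2 hβ1) (t+s)).symm
    have hset : {s : ℝ | γ < G (t + s)} ∩ Ioi 0 = Ioo 0 (VaR μ γ Y - t) := by
      ext s
      simp only [mem_inter_iff, mem_setOf_eq, mem_Ioi, mem_Ioo, hchar s]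
      constructor
      · rintro ⟨h1, h2⟩; exact ⟨h2, by linarith⟩
      · rintro ⟨h1, h2⟩; exact ⟨by linarith, h1⟩
    have h1 : ∫⁻ s in Ioi (0:ℝ), W γ s
        = ∫⁻ s in Ioi (0:ℝ), ({s : ℝ | γ < G (t + s)}.indicator (fun _ => (1:ℝ≥0∞))) s := by
      refine setLIntegral_congr_fun measurableSet_Ioi (fun s _ => ?_)
      by_cases h : γ < G (t + s) <;> simp [hW, h, Set.indicator_apply]
    rw [h1, lintegral_indicator (hsm γ), setLIntegral_one, Measure.restrict_apply (hsm γ), hset,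
      Real.volume_Ioo, sub_zero]
  have step2 : ∀ s ∈ Ioi (0:ℝ), ∫⁻ γ in Ioo (0:ℝ) β, W γ s
      = ENNReal.ofReal (min β (G (t + s))) := by
    intro s _
    have h1 : ∫⁻ γ in Ioo (0:ℝ) β, W γ s
        = ∫⁻ γ in Ioo (0:ℝ) β, ((Iio (G (t+s))).indicator (fun _ => (1:ℝ≥0∞))) γ := by
      refine setLIntegral_congr_fun measurableSet_Ioo (fun γ _ => ?_)
      by_cases h : γ < G (t + s) <;> simp [hW, h, Set.indicator_apply]
    rw [h1, lintegral_indicator measurableSet_Iio, setLIntegral_one,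
      Measure.restrict_apply measurableSet_Iio]
    have hs2 : Iio (G (t+s)) ∩ Ioo 0 β = Ioo 0 (min β (G (t+s))) := by
      ext x
      simp only [mem_inter_iff, mem_Iio, mem_Ioo, lt_min_iff]
      tauto
    rw [hs2, Real.volume_Ioo, sub_zero]
  calc ∫⁻ γ in Ioo (0:ℝ) β, ENNReal.ofReal (VaR μ γ Y - t)
      = ∫⁻ γ in Ioo (0:ℝ) β, ∫⁻ s in Ioi (0:ℝ), W γ s :=
        setLIntegral_congr_fun measurableSet_Ioo step1
    _ = ∫⁻ s in Ioi (0:ℝ), ∫⁻ γ in Ioo (0:ℝ) β, W γ s :=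
        lintegral_lintegral_swap (hWmeas.aemeasurable)
    _ = ∫⁻ s in Ioi (0:ℝ), ENNReal.ofReal (min β (G (t + s))) :=
        setLIntegral_congr_fun measurableSet_Ioi step2

set_option linter.unusedSectionVars false
variable {Ω : Type*} [MeasurableSpace Ω] {μ : Measure Ω} [IsProbabilityMeasure μ]
variable {Y : Ω → ℝ}

/-- layer cake for the positive part. -/
lemma posPart_lint (hY : AEMeasurable Y μ) (hInt : Integrable Y μ) (t : ℝ) :
    ∫⁻ s in Ioi (0:ℝ), ENNReal.ofReal (1 - cdf (μ.map Y) (t + s)) =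
    ENNReal.ofReal (∫ ω, max (Y ω - t) 0 ∂μ) := by
  have hint : Integrable (fun ω => max (Y ω - t) 0) μ := (hInt.sub (integrable_const t)).pos_part
  have hnn : 0 ≤ᵐ[μ] fun ω => max (Y ω - t) 0 := ae_of_all _ fun ω => le_max_right _ _
  rw [ofReal_integral_eq_lintegral_ofReal hint hnn,
    lintegral_eq_lintegral_meas_lt μ hnn hint.aemeasurable]
  refine setLIntegral_congr_fun measurableSet_Ioi (fun s hs => ?_) |>.symm
  have : {a | s < max (Y a - t) 0} = {ω | t + s < Y ω} := by
    ext ω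
    simp only [mem_setOf_eq, lt_max_iff]
    constructor
    · rintro (h | h); · linarith
      · exact absurd h (not_lt.2 (le_of_lt hs)).elim -- s < 0 impossible
    · intro h; left; linarith
  rw [this, meas_gt hY]

lemma var_anti (hY : AEMeasurable Y μ) {γ δ : ℝ} (hγ0 : 0 < γ) (hγδ : γ ≤ δ) (hδ1 : δ < 1) :
    VaR μ δ Y ≤ VaR μ γ Y := by
  rw [var_le_iff hY (lt_of_lt_of_le hγ0 hγδ) hδ1]
  have h := (var_le_iff hY hγ0 (lt_of_le_of_lt hγδ hδ1) (VaR μ γ Y)).1 le_rfl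
  linarith

lemma G_var_le (hY : AEMeasurable Y μ) {β : ℝ} (hβ0 : 0 < β) (hβ1 : β < 1) :
    1 - cdf (μ.map Y) (VaR μ β Y) ≤ β := by
  have h := (var_le_iff hY hβ0 hβ1 (VaR μ β Y)).1 le_rfl
  linarith

/-- the min collapses at `t = VaR β`. -/
lemma lint_eq_at_var (hY : AEMeasurable Y μ) (hInt : Integrable Y μ) {β : ℝ}
    (hβ0 : 0 < β) (hβ1 : β < 1) :
    ∫⁻ γ in Ioo (0:ℝ) β, ENNReal.ofReal (VaR μ γ Y - VaR μ β Y) =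
    ENNReal.ofReal (∫ ω, max (Y ω - VaR μ β Y) 0 ∂μ) := by
  rw [lint_eq hY hβ0 hβ1, ← posPart_lint hY hInt]
  refine setLIntegral_congr_fun measurableSet_Ioi (fun s hs => ?_)
  have h1 : cdf (μ.map Y) (VaR μ β Y) ≤ cdf (μ.map Y) (VaR μ β Y + s) :=
    monotone_cdf _ (by linarith [mem_Ioi.1 hs])
  have h2 := G_var_le hY hβ0 hβ1
  rw [min_eq_right (by linarith)]

set_option linter.unusedSectionVars false
variable {Ω : Type*} [MeasurableSpace Ω] {μ : Measure Ω} [IsProbabilityMeasure μ]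
variable {Y : Ω → ℝ}

/-- bound `lint_eq` RHS by the posPart integral. -/
lemma lint_le (hY : AEMeasurable Y μ) (hInt : Integrable Y μ) {β : ℝ}
    (hβ0 : 0 < β) (hβ1 : β < 1) (t : ℝ) :
    ∫⁻ γ in Ioo (0:ℝ) β, ENNReal.ofReal (VaR μ γ Y - t) ≤
    ENNReal.ofReal (∫ ω, max (Y ω - t) 0 ∂μ) := by
  rw [lint_eq hY hβ0 hβ1, ← posPart_lint hY hInt]
  exact lintegral_mono fun s => ENNReal.ofReal_le_ofReal (min_le_right _ _)

lemma q_aemeas (hY : AEMeasurable Y μ) {β : ℝ} (hβ0 : 0 < β) (hβ1 : β < 1) :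
    AEMeasurable (fun γ => VaR μ γ Y) (volume.restrict (Ioo (0:ℝ) β)) := by
  refine aemeasurable_restrict_of_antitoneOn measurableSet_Ioo ?_
  intro x hx y hy hxy
  exact var_anti hY hx.1 hxy (lt_trans hy.2 hβ1)

lemma q_integrableOn (hY : AEMeasurable Y μ) (hInt : Integrable Y μ) {β : ℝ}
    (hβ0 : 0 < β) (hβ1 : β < 1) :
    IntegrableOn (fun γ => VaR μ γ Y) (Ioo (0:ℝ) β) := by
  set qβ := VaR μ β Y with hqβ
  refine ⟨(q_aemeas hY hβ0 hβ1).aestronglyMeasurable, ?_⟩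
  rw [hasFiniteIntegral_iff_norm]
  have hb : ∀ γ ∈ Ioo (0:ℝ) β, ENNReal.ofReal ‖VaR μ γ Y‖ ≤
      ENNReal.ofReal |qβ| + ENNReal.ofReal (VaR μ γ Y - qβ) := by
    intro γ hγ
    have h1 : qβ ≤ VaR μ γ Y := var_anti hY hγ.1 hγ.2.le hβ1
    rw [← ENNReal.ofReal_add (abs_nonneg _) (by linarith)]
    refine ENNReal.ofReal_le_ofReal ?_
    rw [Real.norm_eq_abs, abs_le]
    constructor
    · have := neg_abs_le qβ; linarith
    · have := le_abs_self qβ; linarith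
  calc ∫⁻ γ in Ioo (0:ℝ) β, ENNReal.ofReal ‖VaR μ γ Y‖
      ≤ ∫⁻ γ in Ioo (0:ℝ) β, (ENNReal.ofReal |qβ| + ENNReal.ofReal (VaR μ γ Y - qβ)) := by
        refine lintegral_mono_ae ?_
        filter_upwards [ae_restrict_mem measurableSet_Ioo] with γ hγ
        exact hb γ hγ
    _ = ENNReal.ofReal |qβ| * volume (Ioo (0:ℝ) β)
        + ∫⁻ γ in Ioo (0:ℝ) β, ENNReal.ofReal (VaR μ γ Y - qβ) := by
        rw [lintegral_add_right' _ (g := fun γ => ENNReal.ofReal (VaR μ γ Y - qβ)) (((q_aemeas hY hβ0 hβ1).sub aemeasurable_const).ennreal_ofReal),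
          setLIntegral_const]
    _ < ⊤ := by
        rw [lint_eq_at_var hY hInt hβ0 hβ1]
        exact ENNReal.add_lt_top.2 ⟨ENNReal.mul_lt_top ENNReal.ofReal_lt_top
          (by rw [Real.volume_Ioo]; exact ENNReal.ofReal_lt_top), ENNReal.ofReal_lt_top⟩

/-- the fundamental ES representation -/
lemma ES_rep (hY : AEMeasurable Y μ) (hInt : Integrable Y μ) {β : ℝ}
    (hβ0 : 0 < β) (hβ1 : β < 1) :
    β * ES μ β Y = β * VaR μ β Y + ∫ ω, max (Y ω - VaR μ β Y) 0 ∂μ := by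
  set qβ := VaR μ β Y with hqβ
  have hES : β * ES μ β Y = ∫ γ in Ioo (0:ℝ) β, VaR μ γ Y := by
    rw [ES, ← mul_assoc, mul_inv_cancel₀ (ne_of_gt hβ0), one_mul,
      intervalIntegral.integral_of_le hβ0.le, integral_Ioc_eq_integral_Ioo]
  rw [hES]
  have hint : IntegrableOn (fun γ => VaR μ γ Y) (Ioo (0:ℝ) β) := q_integrableOn hY hInt hβ0 hβ1
  have hconst : IntegrableOn (fun _ : ℝ => qβ) (Ioo (0:ℝ) β) :=
    integrableOn_const (by rw [Real.volume_Ioo]; exact ENNReal.ofReal_ne_top)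
  have h1 : ∫ γ in Ioo (0:ℝ) β, (VaR μ γ Y - qβ)
      = (∫ γ in Ioo (0:ℝ) β, VaR μ γ Y) - β * qβ := by
    rw [integral_sub hint hconst, setIntegral_const, measureReal_def, Real.volume_Ioo, sub_zero,
      ENNReal.toReal_ofReal hβ0.le, smul_eq_mul]
  have h2 : ∫ γ in Ioo (0:ℝ) β, (VaR μ γ Y - qβ) = ∫ ω, max (Y ω - qβ) 0 ∂μ := by
    rw [integral_eq_lintegral_of_nonneg_ae ?h1 ?h2]
    case h1 =>
      filter_upwards [ae_restrict_mem measurableSet_Ioo] with γ hγ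
      have := var_anti hY hγ.1 hγ.2.le hβ1
      simp only [Pi.zero_apply]
      linarith
    case h2 =>
      exact ((q_aemeas hY hβ0 hβ1).sub aemeasurable_const).aestronglyMeasurable
    have hnn : (0:ℝ) ≤ ∫ ω, max (Y ω - qβ) 0 ∂μ := integral_nonneg fun ω => le_max_right _ _
    rw [lint_eq_at_var hY hInt hβ0 hβ1, ENNReal.toReal_ofReal hnn]
  linarith

set_option linter.unusedSectionVars false
variable {Ω : Type*} [MeasurableSpace Ω] {μ : Measure Ω} [IsProbabilityMeasure μ]
variable {Y : Ω → ℝ}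

lemma ES_min_le (hY : AEMeasurable Y μ) (hInt : Integrable Y μ) {β : ℝ}
    (hβ0 : 0 < β) (hβ1 : β < 1) (t : ℝ) :
    β * ES μ β Y ≤ β * t + ∫ ω, max (Y ω - t) 0 ∂μ := by
  have hES : β * ES μ β Y = ∫ γ in Ioo (0:ℝ) β, VaR μ γ Y := by
    rw [ES, ← mul_assoc, mul_inv_cancel₀ (ne_of_gt hβ0), one_mul,
      intervalIntegral.integral_of_le hβ0.le, integral_Ioc_eq_integral_Ioo]
  have hint := q_integrableOn hY hInt hβ0 hβ1
  have hconst : IntegrableOn (fun _ : ℝ => t) (Ioo (0:ℝ) β) :=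
    integrableOn_const (by rw [Real.volume_Ioo]; exact ENNReal.ofReal_ne_top)
  have h1 : ∫ γ in Ioo (0:ℝ) β, (VaR μ γ Y - t)
      = (∫ γ in Ioo (0:ℝ) β, VaR μ γ Y) - β * t := by
    rw [integral_sub hint hconst, setIntegral_const, measureReal_def, Real.volume_Ioo, sub_zero,
      ENNReal.toReal_ofReal hβ0.le, smul_eq_mul]
  have h2 : ∫ γ in Ioo (0:ℝ) β, (VaR μ γ Y - t)
      ≤ ∫ γ in Ioo (0:ℝ) β, max (VaR μ γ Y - t) 0 :=
    integral_mono (hint.sub hconst) (hint.sub hconst).pos_part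
      (fun γ => le_max_left _ _)
  have h3 : ∫ γ in Ioo (0:ℝ) β, max (VaR μ γ Y - t) 0
      = (∫⁻ γ in Ioo (0:ℝ) β, ENNReal.ofReal (VaR μ γ Y - t)).toReal := by
    have hi : Integrable (fun γ => max (VaR μ γ Y - t) 0) (volume.restrict (Ioo (0:ℝ) β)) :=
      (hint.sub hconst).pos_part
    have hmax_eq : ∫⁻ γ in Ioo (0:ℝ) β, ENNReal.ofReal (max (VaR μ γ Y - t) 0)
        = ∫⁻ γ in Ioo (0:ℝ) β, ENNReal.ofReal (VaR μ γ Y - t) := by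
      refine lintegral_congr fun γ => ?_
      rcases le_total (VaR μ γ Y - t) 0 with h | h
      · rw [max_eq_right h, ENNReal.ofReal_zero, ENNReal.ofReal_of_nonpos h]
      · rw [max_eq_left h]
    have hnn2 : (0:ℝ) ≤ ∫ γ in Ioo (0:ℝ) β, max (VaR μ γ Y - t) 0 :=
      integral_nonneg fun γ => le_max_right _ _
    rw [← hmax_eq, ← ofReal_integral_eq_lintegral_ofReal hi
      (ae_of_all _ fun γ => le_max_right _ _), ENNReal.toReal_ofReal hnn2]
  have h4 : (∫⁻ γ in Ioo (0:ℝ) β, ENNReal.ofReal (VaR μ γ Y - t)).toReal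
      ≤ ∫ ω, max (Y ω - t) 0 ∂μ := by
    have h5 := ENNReal.toReal_mono ENNReal.ofReal_ne_top (lint_le hY hInt hβ0 hβ1 t)
    have hnn : (0:ℝ) ≤ ∫ ω, max (Y ω - t) 0 ∂μ := integral_nonneg fun ω => le_max_right _ _
    rwa [ENNReal.toReal_ofReal hnn] at h5
  linarith

set_option linter.unusedSectionVars false
variable {Ω : Type*} [MeasurableSpace Ω] {μ : Measure Ω} [IsProbabilityMeasure μ]
variable {Y : Ω → ℝ}

lemma integral_const_prob (c : ℝ) : ∫ (_ : Ω), c ∂μ = c := by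
  simp [integral_const, measure_univ]

lemma posPart_int (hInt : Integrable Y μ) (t : ℝ) :
    Integrable (fun ω => max (Y ω - t) 0) μ := (hInt.sub (integrable_const t)).pos_part

lemma posPart_ge (hInt : Integrable Y μ) (t : ℝ) :
    (∫ ω, Y ω ∂μ) - t ≤ ∫ ω, max (Y ω - t) 0 ∂μ := by
  have h := integral_mono (hInt.sub (integrable_const t)) (posPart_int hInt t)
    (fun ω => le_max_left _ _)
  simp only [Pi.sub_apply] at h
  rwa [integral_sub hInt (integrable_const t), integral_const_prob] at h

lemma posPartInt_nonneg (t : ℝ) : (0:ℝ) ≤ ∫ ω, max (Y ω - t) 0 ∂μ :=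
  integral_nonneg fun ω => le_max_right _ _

lemma mean_le_ES (hY : AEMeasurable Y μ) (hInt : Integrable Y μ) {β : ℝ}
    (hβ0 : 0 < β) (hβ1 : β < 1) :
    ∫ ω, Y ω ∂μ ≤ ES μ β Y := by
  set t := VaR μ β Y
  set m := ∫ ω, Y ω ∂μ
  have h1 := ES_rep hY hInt hβ0 hβ1
  have h2 : m - t ≤ ∫ ω, max (Y ω - t) 0 ∂μ := posPart_ge hInt t
  have h3 : (0:ℝ) ≤ ∫ ω, max (Y ω - t) 0 ∂μ := posPartInt_nonneg t
  have key : β * m ≤ β * ES μ β Y := by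
    rcases le_total t m with h | h
    · nlinarith [mul_nonneg (sub_nonneg.2 hβ1.le) (sub_nonneg.2 h)]
    · nlinarith [mul_nonneg hβ0.le (sub_nonneg.2 h)]
  exact le_of_mul_le_mul_left key hβ0

lemma eq_const_of_ES_eq_mean (hY : AEMeasurable Y μ) (hInt : Integrable Y μ) {β : ℝ}
    (hβ0 : 0 < β) (hβ1 : β < 1) (heq : ES μ β Y = ∫ ω, Y ω ∂μ) :
    Y =ᵐ[μ] fun _ => ∫ ω, Y ω ∂μ := by
  set t := VaR μ β Y with ht
  set m := ∫ ω, Y ω ∂μ with hm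
  have h1 := ES_rep hY hInt hβ0 hβ1
  have h2 : m - t ≤ ∫ ω, max (Y ω - t) 0 ∂μ := posPart_ge hInt t
  have h3 : (0:ℝ) ≤ ∫ ω, max (Y ω - t) 0 ∂μ := posPartInt_nonneg t
  rw [heq] at h1
  have htm1 : t ≤ m := by
    by_contra hcon
    push_neg at hcon
    nlinarith
  have htm : t = m := by nlinarith [mul_nonneg (sub_nonneg.2 hβ1.le) (sub_nonneg.2 htm1)]
  have hE0 : ∫ ω, max (Y ω - t) 0 ∂μ = 0 := by nlinarith
  have hae : ∀ᵐ ω ∂μ, max (Y ω - t) 0 = 0 :=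
    (integral_eq_zero_iff_of_nonneg_ae (ae_of_all _ fun ω => le_max_right _ _)
      (posPart_int hInt t)).1 hE0
  have hle : ∀ᵐ ω ∂μ, Y ω ≤ m := by
    filter_upwards [hae] with ω hω
    rw [← htm]
    by_contra h
    push_neg at h
    rw [max_eq_left (by linarith)] at hω
    linarith
  have hint2 : Integrable (fun ω => m - Y ω) μ := (integrable_const m).sub hInt
  have hz : ∫ ω, (m - Y ω) ∂μ = 0 := by
    rw [integral_sub (integrable_const m) hInt, integral_const_prob, ← hm, sub_self]
  have hfin := (integral_eq_zero_iff_of_nonneg_ae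
    (by filter_upwards [hle] with ω hω; simp only [Pi.zero_apply]; linarith) hint2).1 hz
  filter_upwards [hfin] with ω hω
  have hzz : m - Y ω = 0 := hω
  show Y ω = m
  linarith

lemma ES_le_iff_exists_r (hY : AEMeasurable Y μ) (hInt : Integrable Y μ) {β : ℝ}
    (hβ0 : 0 < β) (hβ1 : β < 1) {c : ℝ} (hc : 0 < μ {ω | c < Y ω}) :
    ES μ β Y ≤ c ↔ ∃ r : ℝ, 0 < r ∧ ∫ ω, max (r * (Y ω - c) + 1) 0 ∂μ ≤ β := by
  constructor
  · intro h
    set t := VaR μ β Y with ht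
    have h1 := ES_rep hY hInt hβ0 hβ1
    have h2 : β * t + ∫ ω, max (Y ω - t) 0 ∂μ ≤ β * c := by
      rw [← h1]; exact mul_le_mul_of_nonneg_left h hβ0.le
    have h3 : (0:ℝ) ≤ ∫ ω, max (Y ω - t) 0 ∂μ := posPartInt_nonneg t
    have htc : t < c := by
      by_contra hcon
      push_neg at hcon
      have hE : ∫ ω, max (Y ω - t) 0 ∂μ ≤ β * (c - t) := by linarith
      have hct : c = t := by nlinarith
      have hE0 : ∫ ω, max (Y ω - t) 0 ∂μ = 0 := by nlinarith
      have hae : ∀ᵐ ω ∂μ, max (Y ω - t) 0 = 0 :=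
        (integral_eq_zero_iff_of_nonneg_ae (ae_of_all _ fun ω => le_max_right _ _)
          (posPart_int hInt t)).1 hE0
      have hnull : μ {ω | c < Y ω} = 0 := by
        refine measure_mono_null (fun ω hω => ?_) (ae_iff.1 hae)
        have hgt : (0:ℝ) < Y ω - t := by rw [← hct]; exact sub_pos.2 hω
        simp only [mem_setOf_eq]
        rw [max_eq_left hgt.le]
        exact ne_of_gt hgt
      exact absurd hnull (ne_of_gt hc)
    have hctpos : (0:ℝ) < c - t := by linarith
    refine ⟨(c - t)⁻¹, inv_pos.2 hctpos, ?_⟩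
    have hr : (c - t)⁻¹ * (c - t) = 1 := inv_mul_cancel₀ (ne_of_gt hctpos)
    have hpt : ∀ ω, max ((c - t)⁻¹ * (Y ω - c) + 1) 0 = (c - t)⁻¹ * max (Y ω - t) 0 := by
      intro ω
      have he : (c - t)⁻¹ * (Y ω - c) + 1 = (c - t)⁻¹ * (Y ω - t) := by
        rw [← hr]; ring
      rw [he, mul_max_of_nonneg _ _ (inv_pos.2 hctpos).le, mul_zero]
    calc ∫ ω, max ((c - t)⁻¹ * (Y ω - c) + 1) 0 ∂μ
        = ∫ ω, (c - t)⁻¹ * max (Y ω - t) 0 ∂μ := integral_congr_ae (ae_of_all _ hpt)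
      _ = (c - t)⁻¹ * ∫ ω, max (Y ω - t) 0 ∂μ := integral_const_mul _ _
      _ ≤ (c - t)⁻¹ * (β * (c - t)) :=
          mul_le_mul_of_nonneg_left (by linarith) (inv_pos.2 hctpos).le
      _ = β * ((c - t)⁻¹ * (c - t)) := by ring
      _ = β := by rw [hr, mul_one]
  · rintro ⟨r, hr, hfr⟩
    set t := c - r⁻¹ with htdef
    have hrc : r * (c - t) = 1 := by
      rw [htdef, sub_sub_cancel, mul_inv_cancel₀ (ne_of_gt hr)]
    have hpt : ∀ ω, max (r * (Y ω - c) + 1) 0 = r * max (Y ω - t) 0 := by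
      intro ω
      have he : r * (Y ω - c) + 1 = r * (Y ω - t) := by rw [← hrc]; ring
      rw [he, mul_max_of_nonneg _ _ hr.le, mul_zero]
    have hE : r * ∫ ω, max (Y ω - t) 0 ∂μ ≤ β := by
      rw [← integral_const_mul]
      calc ∫ ω, r * max (Y ω - t) 0 ∂μ = ∫ ω, max (r * (Y ω - c) + 1) 0 ∂μ :=
            integral_congr_ae (ae_of_all _ fun ω => (hpt ω).symm)
        _ ≤ β := hfr
    have h4 : ∫ ω, max (Y ω - t) 0 ∂μ ≤ β * r⁻¹ := by
      have h6 : r * (β * r⁻¹) = β := by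
        rw [mul_comm β r⁻¹, ← mul_assoc, mul_inv_cancel₀ (ne_of_gt hr), one_mul]
      have h5 : r * ∫ ω, max (Y ω - t) 0 ∂μ ≤ r * (β * r⁻¹) := by rw [h6]; exact hE
      exact le_of_mul_le_mul_left h5 hr
    have key : β * t + ∫ ω, max (Y ω - t) 0 ∂μ ≤ β * c := by
      have h7 : β * t + β * r⁻¹ = β * c := by rw [htdef]; ring
      calc β * t + ∫ ω, max (Y ω - t) 0 ∂μ ≤ β * t + β * r⁻¹ := by linarith
        _ = β * c := h7
    exact le_of_mul_le_mul_left (le_trans (ES_min_le hY hInt hβ0 hβ1 t) key) hβ0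

set_option linter.unusedSectionVars false
variable {Ω : Type*} [MeasurableSpace Ω] {μ : Measure Ω} [IsProbabilityMeasure μ]
variable {S : Ω → ℝ}

lemma fint (hInt : Integrable S μ) (c r : ℝ) :
    Integrable (fun ω => max (r * (S ω - c) + 1) 0) μ :=
  (((hInt.sub (integrable_const c)).const_mul r).add (integrable_const 1)).pos_part

lemma fLip (hInt : Integrable S μ) (c : ℝ) (r s : ℝ) :
    |(∫ ω, max (r * (S ω - c) + 1) 0 ∂μ) - ∫ ω, max (s * (S ω - c) + 1) 0 ∂μ|
      ≤ |r - s| * ∫ ω, |S ω - c| ∂μ := by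
  have habs : Integrable (fun ω => |S ω - c|) μ := (hInt.sub (integrable_const c)).abs
  rw [← integral_sub (fint hInt c r) (fint hInt c s)]
  calc |∫ ω, (max (r * (S ω - c) + 1) 0 - max (s * (S ω - c) + 1) 0) ∂μ|
      ≤ ∫ ω, |max (r * (S ω - c) + 1) 0 - max (s * (S ω - c) + 1) 0| ∂μ :=
        by simpa [Real.norm_eq_abs] using
          norm_integral_le_integral_norm (μ := μ)
            (fun ω => max (r * (S ω - c) + 1) 0 - max (s * (S ω - c) + 1) 0)
    _ ≤ ∫ ω, |r - s| * |S ω - c| ∂μ := by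
        refine integral_mono ((fint hInt c r).sub (fint hInt c s)).abs (habs.const_mul _) ?_
        intro ω
        calc |max (r * (S ω - c) + 1) 0 - max (s * (S ω - c) + 1) 0|
            ≤ |(r * (S ω - c) + 1) - (s * (S ω - c) + 1)| := abs_max_sub_max_le_abs _ _ _
          _ = |r - s| * |S ω - c| := by rw [← abs_mul]; ring_nf
    _ = |r - s| * ∫ ω, |S ω - c| ∂μ := integral_const_mul _ _

lemma f_zero (c : ℝ) : ∫ ω, max ((0:ℝ) * (S ω - c) + 1) 0 ∂μ = 1 := by
  simp

lemma f_cont (hInt : Integrable S μ) (c : ℝ) :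
    Continuous (fun r : ℝ => ∫ ω, max (r * (S ω - c) + 1) 0 ∂μ) := by
  set L := ∫ ω, |S ω - c| ∂μ with hL
  have hL0 : 0 ≤ L := integral_nonneg fun ω => abs_nonneg _
  refine (LipschitzWith.of_dist_le_mul (K := L.toNNReal) fun r s => ?_).continuous
  rw [Real.dist_eq, Real.dist_eq, Real.coe_toNNReal _ hL0, mul_comm]
  exact le_trans (fLip hInt c r s) (by rw [mul_comm])

/-- lower bound by the probability of exceedance at a higher level -/
lemma f_lb (hY : AEMeasurable S μ) (hInt : Integrable S μ) (c : ℝ) {r ε : ℝ}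
    (hr : 0 ≤ r) (hε : 0 ≤ ε) :
    (r * ε + 1) * (μ {ω | c + ε < S ω}).toReal ≤ ∫ ω, max (r * (S ω - c) + 1) 0 ∂μ := by
  set T := {ω | c + ε < hY.mk S ω} with hT
  have hTmeas : MeasurableSet T := measurableSet_lt measurable_const hY.measurable_mk
  have hμT : μ {ω | c + ε < S ω} = μ T := by
    refine measure_congr ?_
    filter_upwards [hY.ae_eq_mk] with ω hω
    change (c + ε < S ω) = (c + ε < hY.mk S ω)
    rw [hω]
  have hind : Integrable (T.indicator (fun _ => r * ε + 1)) μ :=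
    (integrable_const (r * ε + 1)).indicator hTmeas
  have hmono : ∀ᵐ ω ∂μ, T.indicator (fun _ => r * ε + 1) ω ≤ max (r * (S ω - c) + 1) 0 := by
    filter_upwards [hY.ae_eq_mk] with ω hω
    by_cases h : ω ∈ T
    · rw [indicator_of_mem h]
      have h2 : c + ε < S ω := by rw [hω]; exact h
      refine le_max_of_le_left ?_
      nlinarith
    · rw [indicator_of_notMem h]
      positivity
  calc (r * ε + 1) * (μ {ω | c + ε < S ω}).toReal
      = ∫ ω, T.indicator (fun _ => r * ε + 1) ω ∂μ := by
        rw [integral_indicator_const _ hTmeas, hμT, smul_eq_mul, measureReal_def, mul_comm]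
    _ ≤ ∫ ω, max (r * (S ω - c) + 1) 0 ∂μ := integral_mono_ae hind (fint hInt c r) hmono

/-- there is a strictly positive exceedance level -/
lemma exists_eps {c : ℝ} (hc : 0 < μ {ω | c < S ω}) :
    ∃ ε : ℝ, 0 < ε ∧ 0 < (μ {ω | c + ε < S ω}).toReal := by
  by_contra h
  push_neg at h
  have hall : ∀ n : ℕ, μ {ω | c + (1/(n+1) : ℝ) < S ω} = 0 := by
    intro n
    have h1 := h (1/(n+1) : ℝ) (by positivity)
    have h2 : (μ {ω | c + (1/(n+1):ℝ) < S ω}).toReal = 0 := le_antisymm h1 ENNReal.toReal_nonneg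
    exact (ENNReal.toReal_eq_zero_iff _).1 h2 |>.resolve_right (measure_ne_top μ _)
  have hsub : {ω | c < S ω} ⊆ ⋃ n : ℕ, {ω | c + (1/(n+1) : ℝ) < S ω} := by
    intro ω hω
    have hω' : c < S ω := hω
    obtain ⟨n, hn⟩ := exists_nat_one_div_lt (sub_pos.2 hω')
    exact mem_iUnion.2 ⟨n, by simp only [mem_setOf_eq]; linarith [hn]⟩
  have : μ {ω | c < S ω} = 0 :=
    measure_mono_null hsub (measure_iUnion_null hall)
  exact absurd this (ne_of_gt hc)

set_option linter.unusedSectionVars false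
variable {Ω : Type*} [MeasurableSpace Ω] {μ : Measure Ω} [IsProbabilityMeasure μ]
variable {S : Ω → ℝ}

lemma f_lt_one (hY : AEMeasurable S μ) (hInt : Integrable S μ) {c : ℝ}
    (hmean : ∫ ω, S ω ∂μ < c) :
    ∃ r : ℝ, 0 < r ∧ ∫ ω, max (r * (S ω - c) + 1) 0 ∂μ < 1 := by
  set m := ∫ ω, S ω ∂μ with hm
  set d := c - m with hd
  have hd0 : 0 < d := sub_pos.2 hmean
  set bound : Ω → ℝ := fun ω => max (c - S ω) 0 with hbound
  have hbint : Integrable bound μ := ((integrable_const c).sub hInt).pos_part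
  have hbmeas : AEStronglyMeasurable bound μ :=
    hbint.aestronglyMeasurable
  set φ : ℕ → Ω → ℝ := fun n ω => ({ω | (n:ℝ) < c - hY.mk S ω}).indicator bound ω with hφ
  have hsetmeas : ∀ n : ℕ, MeasurableSet {ω | (n:ℝ) < c - hY.mk S ω} := fun n =>
    measurableSet_lt measurable_const (measurable_const.sub hY.measurable_mk)
  have htend : Tendsto (fun n => ∫ ω, φ n ω ∂μ) atTop (𝓝 (∫ ω, (0:ℝ) ∂μ)) := by
    refine tendsto_integral_of_dominated_convergence bound
      (fun n => hbmeas.indicator (hsetmeas n)) hbint ?_ ?_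
    · intro n
      refine ae_of_all _ fun ω => ?_
      by_cases h : ω ∈ {ω | (n:ℝ) < c - hY.mk S ω}
      · rw [hφ]; simp only [indicator_of_mem h]
        rw [Real.norm_eq_abs, abs_of_nonneg (le_max_right _ _)]
      · rw [hφ]; simp only [indicator_of_notMem h, norm_zero]
        exact le_max_right _ _
    · refine ae_of_all _ fun ω => ?_
      obtain ⟨N, hN⟩ := exists_nat_ge (c - hY.mk S ω)
      have hev : ∀ᶠ n in atTop, φ n ω = 0 := by
        refine eventually_atTop.2 ⟨N, fun n hn => ?_⟩
        have : ¬ ((n:ℝ) < c - hY.mk S ω) := by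
          push_neg
          calc c - hY.mk S ω ≤ N := hN
            _ ≤ n := Nat.cast_le.2 hn
        show ({ω | (n:ℝ) < c - hY.mk S ω}).indicator bound ω = 0
        have this2 : ω ∉ {ω | (n:ℝ) < c - hY.mk S ω} := this
        rw [Set.indicator_of_notMem this2]
      exact tendsto_const_nhds.congr' (hev.mono fun n hn => hn.symm)
  rw [integral_zero] at htend
  obtain ⟨n0, hn0⟩ := (htend.eventually (eventually_lt_nhds hd0)).exists
  set r : ℝ := ((n0:ℝ)+1)⁻¹ with hr
  have hr0 : 0 < r := by positivity
  refine ⟨r, hr0, ?_⟩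
  -- identity : f r = (r * (m - c) + 1) + ∫ max (r(c-S) - 1) 0
  have hid : ∀ ω, max (r * (S ω - c) + 1) 0
      = (r * (S ω - c) + 1) + max (r * (c - S ω) - 1) 0 := by
    intro ω
    rcases le_total 0 (r * (S ω - c) + 1) with h | h
    · rw [max_eq_left h, max_eq_right (by linarith), add_zero]
    · rw [max_eq_right h, max_eq_left (by linarith)]
      ring
  have hint1 : Integrable (fun ω => r * (S ω - c) + 1) μ :=
    ((hInt.sub (integrable_const c)).const_mul r).add (integrable_const 1)
  have hint2 : Integrable (fun ω => max (r * (c - S ω) - 1) 0) μ :=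
    ((((integrable_const c).sub hInt).const_mul r).sub (integrable_const 1)).pos_part
  have hsplit : ∫ ω, max (r * (S ω - c) + 1) 0 ∂μ
      = (∫ ω, (r * (S ω - c) + 1) ∂μ) + ∫ ω, max (r * (c - S ω) - 1) 0 ∂μ := by
    rw [← integral_add hint1 hint2]
    exact integral_congr_ae (ae_of_all _ hid)
  have hlin : ∫ ω, (r * (S ω - c) + 1) ∂μ = r * (m - c) + 1 := by
    have e1 : Integrable (fun ω => r * (S ω - c)) μ := by
      simpa using (hInt.sub (integrable_const c)).const_mul r
    rw [integral_add e1 (integrable_const 1), integral_const_mul,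
      integral_sub hInt (integrable_const c)]
    simp [integral_const, measure_univ, hm]
  have hg : ∫ ω, max (r * (c - S ω) - 1) 0 ∂μ ≤ r * ∫ ω, φ n0 ω ∂μ := by
    rw [← integral_const_mul]
    refine integral_mono_ae hint2 ((hbint.indicator (hsetmeas n0)).const_mul r) ?_
    filter_upwards [hY.ae_eq_mk] with ω hω
    have hφnn : (0:ℝ) ≤ φ n0 ω := by
      rw [hφ]
      exact Set.indicator_nonneg (fun ω _ => le_max_right (c - S ω) 0) ω
    rcases le_total (r * (c - S ω)) 1 with h | h
    · rw [max_eq_right (by linarith)]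
      exact mul_nonneg hr0.le hφnn
    · have hn1 : ((n0:ℝ)+1) * r = 1 := by
        rw [hr]; exact mul_inv_cancel₀ (by positivity)
      have hc1 : (n0:ℝ) + 1 ≤ c - S ω := by nlinarith [hr0]
      have hgt : ω ∈ {ω | (n0:ℝ) < c - hY.mk S ω} := by
        show (n0:ℝ) < c - hY.mk S ω
        rw [← hω]
        have : (0:ℝ) ≤ (n0:ℝ) := Nat.cast_nonneg n0
        linarith
      have hval : φ n0 ω = max (c - S ω) 0 := by
        rw [hφ]
        show ({ω | (n0:ℝ) < c - hY.mk S ω}).indicator bound ω = max (c - S ω) 0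
        rw [Set.indicator_of_mem hgt]
      show max (r * (c - S ω) - 1) 0 ≤ r * φ n0 ω
      rw [max_eq_left (by linarith), hval, max_eq_left (by linarith)]
      linarith
  calc ∫ ω, max (r * (S ω - c) + 1) 0 ∂μ
      = (r * (m - c) + 1) + ∫ ω, max (r * (c - S ω) - 1) 0 ∂μ := by rw [hsplit, hlin]
    _ ≤ (r * (m - c) + 1) + r * ∫ ω, φ n0 ω ∂μ := by linarith
    _ < 1 := by
        have : r * ∫ ω, φ n0 ω ∂μ < r * d := by
          exact mul_lt_mul_of_pos_left hn0 hr0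
        rw [hd] at this
        nlinarith [hr0]

set_option linter.unusedSectionVars false
variable {Ω : Type*} [MeasurableSpace Ω] {μ : Measure Ω} [IsProbabilityMeasure μ]
variable {S : Ω → ℝ}

lemma exists_min (hY : AEMeasurable S μ) (hInt : Integrable S μ) {c : ℝ}
    (hc : 0 < μ {ω | c < S ω}) (hmean : ∫ ω, S ω ∂μ < c) :
    ∃ r : ℝ, 0 < r ∧
      (∀ s : ℝ, 0 < s →
        ∫ ω, max (r * (S ω - c) + 1) 0 ∂μ ≤ ∫ ω, max (s * (S ω - c) + 1) 0 ∂μ) ∧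
      0 < ∫ ω, max (r * (S ω - c) + 1) 0 ∂μ ∧ ∫ ω, max (r * (S ω - c) + 1) 0 ∂μ < 1 := by
  set f : ℝ → ℝ := fun r => ∫ ω, max (r * (S ω - c) + 1) 0 ∂μ with hf
  obtain ⟨r1, hr1, hfr1⟩ := f_lt_one hY hInt hmean
  set L0 : ℝ := ∫ ω, |S ω - c| ∂μ with hL0
  have hL0nn : 0 ≤ L0 := integral_nonneg fun ω => abs_nonneg _
  have hf0 : f 0 = 1 := f_zero c
  have hlow : ∀ s : ℝ, 0 ≤ s → 1 - s * L0 ≤ f s := by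
    intro s hs
    have h := fLip hInt c s 0
    rw [f_zero c, sub_zero, abs_of_nonneg hs] at h
    show 1 - s * L0 ≤ ∫ ω, max (s * (S ω - c) + 1) 0 ∂μ
    have h2 := (abs_le.1 h).1
    rw [hL0]
    linarith
  set δ : ℝ := min r1 ((1 - f r1) / (2 * (L0 + 1))) with hδ
  have hδ0 : 0 < δ := lt_min hr1 (div_pos (by linarith) (by positivity))
  have hsmall : ∀ s : ℝ, 0 < s → s < δ → f r1 < f s := by
    intro s hs hsδ
    have h1 : 1 - s * L0 ≤ f s := hlow s hs.le
    have h2 : s * L0 ≤ δ * (L0 + 1) := by nlinarith [min_le_right r1 ((1 - f r1) / (2 * (L0 + 1)))]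
    have h3 : δ * (L0 + 1) ≤ (1 - f r1) / 2 := by
      have := min_le_right r1 ((1 - f r1) / (2 * (L0 + 1)))
      calc δ * (L0 + 1) ≤ ((1 - f r1) / (2 * (L0 + 1))) * (L0 + 1) := by nlinarith
        _ = (1 - f r1) / 2 := by field_simp
    linarith
  obtain ⟨ε, hε, hP⟩ := exists_eps hc
  set P : ℝ := (μ {ω | c + ε < S ω}).toReal with hPdef
  set R : ℝ := max r1 (1 / (ε * P)) with hR
  have hbig : ∀ s : ℝ, R < s → f r1 < f s := by
    intro s hsR
    have hs0 : (0:ℝ) ≤ s := le_trans (le_trans (by positivity) (le_max_right r1 _)) hsR.le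
    have h1 : (s * ε + 1) * P ≤ f s := f_lb hY hInt c hs0 hε.le
    have h2 : 1 / (ε * P) < s := lt_of_le_of_lt (le_max_right _ _) hsR
    have h3 : 1 < s * ε * P := by
      rw [div_lt_iff₀ (by positivity)] at h2
      nlinarith
    nlinarith
  have hδR : δ ≤ R := le_trans (min_le_left _ _) (le_max_left _ _)
  obtain ⟨rs, hrsmem, hrsmin⟩ := isCompact_Icc.exists_isMinOn (f := f)
    ⟨r1, min_le_left _ _, le_max_left _ _⟩ ((f_cont hInt c).continuousOn)
  have hmin : ∀ x ∈ Icc δ R, f rs ≤ f x := fun x hx => hrsmin hx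
  have hrs0 : 0 < rs := lt_of_lt_of_le hδ0 hrsmem.1
  have hrs_le_r1 : f rs ≤ f r1 := hmin r1 ⟨min_le_left _ _, le_max_left _ _⟩
  refine ⟨rs, hrs0, ?_, ?_, lt_of_le_of_lt hrs_le_r1 hfr1⟩
  · intro s hs
    rcases lt_or_ge s δ with h | h
    · exact le_trans hrs_le_r1 (hsmall s hs h).le
    · rcases le_or_gt s R with h2 | h2
      · exact hmin s ⟨h, h2⟩
      · exact le_trans hrs_le_r1 (hbig s h2).le
  · have hlb := f_lb hY hInt c (r := rs) (ε := 0) hrs0.le le_rfl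
    rw [mul_zero, zero_add, one_mul, add_zero] at hlb
    have : 0 < (μ {ω | c < S ω}).toReal :=
      ENNReal.toReal_pos (ne_of_gt hc) (measure_ne_top μ _)
    exact lt_of_lt_of_le this hlb

end Lemmas

/-- minimization formula for `DQ^ES_α`. -/
theorem stmt_12 {Ω : Type*} [MeasurableSpace Ω] (μ : Measure Ω) [IsProbabilityMeasure μ]
    (hatomless : ∀ s : Set Ω, MeasurableSet s → 0 < μ s →
      ∃ t, t ⊆ s ∧ MeasurableSet t ∧ 0 < μ t ∧ μ t < μ s)
    (n : ℕ) (hn : 0 < n)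
    (α : ℝ) (hα0 : 0 < α) (hα1 : α < 1)
    (X : Fin n → Ω → ℝ) (hX : ∀ i, Integrable (X i) μ) :
    (0 < μ {ω | ∑ i, ES μ α (X i) < ∑ i, X i ω} →
      ∃ r : ℝ, 0 < r ∧
        (∀ s : ℝ, 0 < s →
          ∫ ω, max (r * (∑ i, (X i ω - ES μ α (X i))) + 1) 0 ∂μ ≤
            ∫ ω, max (s * (∑ i, (X i ω - ES μ α (X i))) + 1) 0 ∂μ) ∧
        DQ 1 (fun β => ES μ β) α X
          = ((α⁻¹ * ∫ ω, max (r * (∑ i, (X i ω - ES μ α (X i))) + 1) 0 ∂μ : ℝ) : EReal))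
    ∧ (μ {ω | ∑ i, ES μ α (X i) < ∑ i, X i ω} = 0 →
        DQ 1 (fun β => ES μ β) α X = 0) := by
  classical
  have hSint : Integrable (fun ω => ∑ i, X i ω) μ :=
    integrable_finset_sum _ (fun i _ => hX i)
  have hSmeas : AEMeasurable (fun ω => ∑ i, X i ω) μ := hSint.aemeasurable
  set S : Ω → ℝ := fun ω => ∑ i, X i ω with hSdef
  set c : ℝ := ∑ i, ES μ α (X i) with hcdef
  have hrw : ∀ (r : ℝ), ∫ ω, max (r * (∑ i, (X i ω - ES μ α (X i))) + 1) 0 ∂μ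
      = ∫ ω, max (r * (S ω - c) + 1) 0 ∂μ := by
    intro r
    refine integral_congr_ae (ae_of_all _ fun ω => ?_)
    rw [hSdef, hcdef]
    simp only [Finset.sum_sub_distrib]
  have hcoe : ∀ β : ℝ, ((β : EReal) < 1 ↔ β < 1) := fun β => by
    rw [show (1 : EReal) = ((1:ℝ) : EReal) from rfl, EReal.coe_lt_coe_iff]
  constructor
  · -- positive-probability case
    intro hpos0
    have hpos : 0 < μ {ω | c < S ω} := hpos0
    have hmean : ∫ ω, S ω ∂μ < c := by
      have hle : ∀ i, ∫ ω, X i ω ∂μ ≤ ES μ α (X i) := fun i =>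
        mean_le_ES (hX i).aemeasurable (hX i) hα0 hα1
      have hsum : ∫ ω, S ω ∂μ = ∑ i, ∫ ω, X i ω ∂μ :=
        integral_finset_sum _ (fun i _ => hX i)
      rcases lt_or_ge (∫ ω, S ω ∂μ) c with h | h
      · exact h
      · exfalso
        have hsum_le : ∑ i, ∫ ω, X i ω ∂μ ≤ c :=
          Finset.sum_le_sum (fun i _ => hle i)
        have heq : ∑ i, ∫ ω, X i ω ∂μ = c := le_antisymm hsum_le (by rw [← hsum]; exact h)
        have hall : ∀ i ∈ Finset.univ, ∫ ω, X i ω ∂μ = ES μ α (X i) :=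
          (Finset.sum_eq_sum_iff_of_le (fun i _ => hle i)).1 (by rw [heq, hcdef])
        have haeX : ∀ᵐ ω ∂μ, ∀ i, X i ω = ∫ ω', X i ω' ∂μ :=
          ae_all_iff.2 (fun i => eq_const_of_ES_eq_mean (hX i).aemeasurable (hX i) hα0 hα1
            ((hall i (Finset.mem_univ i)).symm))
        have haeS : ∀ᵐ ω ∂μ, S ω = c := by
          filter_upwards [haeX] with ω hω
          rw [hSdef]
          simp only
          rw [Finset.sum_congr rfl (fun i _ => hω i), hcdef]
          exact Finset.sum_congr rfl (fun i hi => hall i hi)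
        have hz : μ {ω | c < S ω} = 0 := by
          have h2 : ∀ᵐ ω ∂μ, ¬ (c < S ω) := by
            filter_upwards [haeS] with ω hω
            rw [hω]
            exact lt_irrefl c
          exact measure_mono_null (fun ω hω => not_not.2 hω) (ae_iff.1 h2)
        exact absurd hz (ne_of_gt hpos)
    obtain ⟨rs, hrs0, hrsmin, hrspos, hrslt1⟩ := exists_min hSmeas hSint hpos hmean
    set M : ℝ := ∫ ω, max (rs * (S ω - c) + 1) 0 ∂μ with hM
    set setβ := {β : ℝ | 0 < β ∧ (β : EReal) < (1:EReal) ∧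
        ES μ β (fun ω => ∑ i, X i ω) ≤ ∑ i, ES μ α (X i)} with hsetβ
    have hseteq : setβ = Ico M 1 := by
      ext β
      constructor
      · rintro ⟨hβ0, hβ1e, hESle⟩
        have hβ1 : β < 1 := (hcoe β).1 hβ1e
        have hESle' : ES μ β S ≤ c := hESle
        obtain ⟨r, hr, hfr⟩ := (ES_le_iff_exists_r hSmeas hSint hβ0 hβ1 hpos).1 hESle'
        exact ⟨le_trans (hrsmin r hr) hfr, hβ1⟩
      · rintro ⟨hMβ, hβ1⟩
        have hβ0 : 0 < β := lt_of_lt_of_le hrspos hMβ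
        refine ⟨hβ0, (hcoe β).2 hβ1, ?_⟩
        show ES μ β S ≤ c
        exact (ES_le_iff_exists_r hSmeas hSint hβ0 hβ1 hpos).2 ⟨rs, hrs0, hMβ⟩
    have hne : setβ.Nonempty := by
      rw [hseteq]
      exact ⟨M, le_rfl, hrslt1⟩
    have hInf : sInf setβ = M := by rw [hseteq]; exact csInf_Ico hrslt1
    refine ⟨rs, hrs0, ?_, ?_⟩
    · intro s hs
      rw [hrw rs, hrw s]
      exact hrsmin s hs
    · rw [hrw rs]
      show (if setβ.Nonempty then ((sInf setβ : ℝ) : EReal) else (1:EReal)) * ((α⁻¹ : ℝ) : EReal)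
          = ((α⁻¹ * M : ℝ) : EReal)
      rw [if_pos hne, hInf, ← EReal.coe_mul, mul_comm]
  · -- zero-probability case
    intro hzero0
    have hzero : μ {ω | c < S ω} = 0 := hzero0
    have haele : ∀ᵐ ω ∂μ, S ω ≤ c := by
      rw [ae_iff]
      have hE : {ω | ¬ S ω ≤ c} = {ω | c < S ω} := by
        ext ω; simp [not_le]
      rw [hE]
      exact hzero
    have hEzero : ∫ ω, max (S ω - c) 0 ∂μ = 0 := by
      have h1 : (fun ω => max (S ω - c) 0) =ᵐ[μ] (fun _ => (0:ℝ)) := by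
        filter_upwards [haele] with ω hω
        rw [max_eq_right (by linarith)]
      rw [integral_congr_ae h1, integral_zero]
    have hESle : ∀ β : ℝ, 0 < β → β < 1 → ES μ β S ≤ c := by
      intro β hβ0 hβ1
      have h := ES_min_le hSmeas hSint hβ0 hβ1 c
      rw [hEzero, add_zero] at h
      exact le_of_mul_le_mul_left h hβ0
    set setβ := {β : ℝ | 0 < β ∧ (β : EReal) < (1:EReal) ∧
        ES μ β (fun ω => ∑ i, X i ω) ≤ ∑ i, ES μ α (X i)} with hsetβ
    have hseteq : setβ = Ioo (0:ℝ) 1 := by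
      ext β
      constructor
      · rintro ⟨hβ0, hβ1e, _⟩
        exact ⟨hβ0, (hcoe β).1 hβ1e⟩
      · rintro ⟨hβ0, hβ1⟩
        exact ⟨hβ0, (hcoe β).2 hβ1, hESle β hβ0 hβ1⟩
    have hne : setβ.Nonempty := by
      rw [hseteq]
      exact ⟨1/2, by norm_num, by norm_num⟩
    have hInf : sInf setβ = 0 := by rw [hseteq]; exact csInf_Ioo zero_lt_one
    show (if setβ.Nonempty then ((sInf setβ : ℝ) : EReal) else (1:EReal)) * ((α⁻¹ : ℝ) : EReal)
        = 0
    rw [if_pos hne, hInf]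
    simp
end

section
/- Fix n ≥ 1 and suppose a risk measure φ on a convex cone X of random variables containing all constants satisfies [PH]_γ (φ(λX) = λ^γ φ(X) for all λ > 0) for some γ ∈ ℝ and [CA]_m (φ(X+c) = φ(X)+mc for all c ∈ ℝ) for some m ≠ 0. Then a diversification index D : X^n → [-∞,∞] is φ-determined and satisfies [+], [LI] and [SI] if and only if there exist C₁, C₂, C₃ ∈ [0,∞] such that for all X ∈ X^n, D(X) = C₁·1{d<0} + C₂·1{d=0} + C₃·1{d>0}, where d = φ(X_1)+⋯+φ(X_n) − φ(X_1+⋯+X_n). -/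
open MeasureTheory

open scoped Classical in
/-- a φ-determined diversification index satisfies [+], [LI] and [SI]
(for an [PH]_γ, [CA]_m risk measure φ with m ≠ 0) if and only if it is of the degenerate
three-value form driven by the sign of the diversification benefit
`d = ∑ φ(X_i) − φ(∑ X_i)`. -/
theorem stmt_16 {Ω : Type*} (𝒳 : Set (Ω → ℝ))
    (hadd : ∀ X ∈ 𝒳, ∀ Y ∈ 𝒳, X + Y ∈ 𝒳)
    (hsmul : ∀ X ∈ 𝒳, ∀ c : ℝ, 0 < c → c • X ∈ 𝒳)
    (hconst : ∀ c : ℝ, (fun _ : Ω => c) ∈ 𝒳)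
    (n : ℕ) (hn : 1 ≤ n)
    (φ : (Ω → ℝ) → ℝ) (γ m : ℝ) (hm : m ≠ 0)
    (hPH : ∀ Y ∈ 𝒳, ∀ l : ℝ, 0 < l → φ (l • Y) = l ^ γ * φ Y)
    (hCA : ∀ Y ∈ 𝒳, ∀ c : ℝ, φ (Y + (fun _ => c)) = φ Y + m * c)
    (D : (Fin n → Ω → ℝ) → EReal) :
    -- D is φ-determined and satisfies [+], [LI], [SI]
    ((∃ R : ℝ × (Fin n → ℝ) → EReal, ∀ X : Fin n → Ω → ℝ, (∀ i, X i ∈ 𝒳) →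
        D X = R (φ (fun ω => ∑ i, X i ω), fun i => φ (X i)))
      ∧ (∀ X : Fin n → Ω → ℝ, (∀ i, X i ∈ 𝒳) → 0 ≤ D X)
      ∧ (∀ X : Fin n → Ω → ℝ, (∀ i, X i ∈ 𝒳) → ∀ c : Fin n → ℝ,
          D (fun i => X i + (fun _ => c i)) = D X)
      ∧ (∀ X : Fin n → Ω → ℝ, (∀ i, X i ∈ 𝒳) → ∀ l : ℝ, 0 < l →
          D (fun i => l • X i) = D X))
    ↔ (∃ C₁ C₂ C₃ : EReal, 0 ≤ C₁ ∧ 0 ≤ C₂ ∧ 0 ≤ C₃ ∧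
        ∀ X : Fin n → Ω → ℝ, (∀ i, X i ∈ 𝒳) →
          D X = if (∑ i, φ (X i)) - φ (fun ω => ∑ i, X i ω) < 0 then C₁
                else if (∑ i, φ (X i)) - φ (fun ω => ∑ i, X i ω) = 0 then C₂
                else C₃) := by
  have hn0 : (0:ℝ) < (n:ℝ) := by exact_mod_cast hn
  -- basic facts about φ on constants
  have hzero : (fun _ : Ω => (0:ℝ)) ∈ 𝒳 := hconst 0
  have hconstφ : ∀ c : ℝ, φ (fun _ : Ω => c) = φ (fun _ : Ω => (0:ℝ)) + m * c := by
    intro c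
    have h := hCA _ hzero c
    have e : (fun _ : Ω => (0:ℝ)) + (fun _ : Ω => c) = fun _ : Ω => c := by
      funext ω; simp
    rwa [e] at h
  have hγl : ∀ l : ℝ, 0 < l → l ^ γ = l := by
    intro l hl
    have h0 : φ (fun _ : Ω => (0:ℝ)) = l ^ γ * φ (fun _ : Ω => (0:ℝ)) := by
      have h := hPH _ hzero l hl
      have e : l • (fun _ : Ω => (0:ℝ)) = fun _ : Ω => (0:ℝ) := by funext ω; simp
      rwa [e] at h
    have h1 := hPH _ (hconst 1) l hl
    have e1 : l • (fun _ : Ω => (1:ℝ)) = fun _ : Ω => l := by funext ω; simp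
    rw [e1, hconstφ l, hconstφ 1] at h1
    have h2 : l ^ γ * m = l * m := by nlinarith [h0, h1]
    exact mul_right_cancel₀ hm h2
  have hφ0 : φ (fun _ : Ω => (0:ℝ)) = 0 := by
    have h := hPH _ hzero 2 (by norm_num)
    have e : (2:ℝ) • (fun _ : Ω => (0:ℝ)) = fun _ : Ω => (0:ℝ) := by funext ω; simp
    rw [e, hγl 2 (by norm_num)] at h
    linarith
  -- sums of members are members
  have hsum : ∀ X : Fin n → Ω → ℝ, (∀ i, X i ∈ 𝒳) → (fun ω => ∑ i, X i ω) ∈ 𝒳 := by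
    intro X hX
    have : ∀ s : Finset (Fin n), (fun ω => ∑ i ∈ s, X i ω) ∈ 𝒳 := by
      intro s
      refine Finset.induction_on s ?_ ?_
      · simpa using hzero
      · intro a s hi ih
        have : (fun ω => ∑ i ∈ insert a s, X i ω)
              = X a + (fun ω => ∑ i ∈ s, X i ω) := by
            funext ω; simp [Finset.sum_insert hi]
        rw [this]
        exact hadd _ (hX a) _ ih
    exact this Finset.univ
  constructor
  · rintro ⟨⟨R, hR⟩, hpos, hLI, hSI⟩
    -- affine normalization lemma
    have haffine : ∀ X : Fin n → Ω → ℝ, (∀ i, X i ∈ 𝒳) → ∀ l : ℝ, 0 < l →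
        ∀ c : Fin n → ℝ,
        D X = R (l * φ (fun ω => ∑ i, X i ω) + m * ∑ i, c i,
                 fun i => l * φ (X i) + m * c i) := by
      intro X hX l hl c
      set Y : Fin n → Ω → ℝ := fun i => l • X i + (fun _ => c i) with hY
      have hYmem : ∀ i, Y i ∈ 𝒳 := fun i =>
        hadd _ (hsmul _ (hX i) l hl) _ (hconst (c i))
      have hDY : D Y = D X := by
        have h1 := hLI (fun i => l • X i) (fun i => hsmul _ (hX i) l hl) c
        have h2 := hSI X hX l hl
        rw [h1, h2]
      have hRY := hR Y hYmem
      rw [hDY] at hRY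
      rw [hRY]
      congr 1
      rw [Prod.mk.injEq]
      refine ⟨?_, ?_⟩
      · -- first component
        have e : (fun ω => ∑ i, Y i ω)
            = (fun ω => ∑ i, (l • X i) ω) + (fun _ => ∑ i, c i) := by
          funext ω; simp [hY, Finset.sum_add_distrib]
        have e2 : (fun ω => ∑ i, (l • X i) ω) = l • (fun ω => ∑ i, X i ω) := by
          funext ω; simp [Finset.mul_sum]
        have hmem2 : (fun ω => ∑ i, (l • X i) ω) ∈ 𝒳 :=
          hsum _ (fun i => hsmul _ (hX i) l hl)
        rw [e, hCA _ hmem2, e2, hPH _ (hsum X hX) l hl, hγl l hl]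
      · -- second component
        funext i
        have : φ (Y i) = φ (l • X i) + m * c i := hCA _ (hsmul _ (hX i) l hl) (c i)
        rw [this, hPH _ (hX i) l hl, hγl l hl]
    -- the canonical value of D depending only on sign of d
    have hnorm : ∀ X : Fin n → Ω → ℝ, (∀ i, X i ∈ 𝒳) →
        D X = R (0, fun _ => (if (∑ i, φ (X i)) - φ (fun ω => ∑ i, X i ω) < 0 then
              (-1:ℝ) else if (∑ i, φ (X i)) - φ (fun ω => ∑ i, X i ω) = 0 then 0
              else 1) / n) := by
      intro X hX
      set s := φ (fun ω => ∑ i, X i ω) with hs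
      set d := (∑ i, φ (X i)) - s with hd
      by_cases hd0 : d = 0
      · rw [hd0]; simp only [lt_irrefl, if_false, if_pos rfl]
        have h := haffine X hX 1 one_pos (fun i => -(φ (X i)) / m)
        rw [h]
        congr 1
        rw [Prod.mk.injEq]
        refine ⟨?_, ?_⟩
        · have : m * ∑ i, -(φ (X i)) / m = -∑ i, φ (X i) := by
            rw [← Finset.sum_div, mul_div_assoc', mul_comm, mul_div_assoc,
              div_self hm]
            simp
          rw [this]
          have h2 : (∑ i, φ (X i)) = s := by
            have := hd0; rw [hd] at this; linarith
          rw [← hs]; linarith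
        · funext i
          field_simp
          simp
      · set σ : ℝ := if d < 0 then -1 else 1 with hσ
        have hστ : (if d < 0 then (-1:ℝ) else if d = 0 then 0 else 1) = σ := by
          rw [hσ]; by_cases h : d < 0 <;> simp [h, hd0]
        rw [hστ]
        have habs : (0:ℝ) < |d| := abs_pos.mpr hd0
        set l : ℝ := |d|⁻¹ with hl
        have hlpos : 0 < l := inv_pos.mpr habs
        have hld : l * d = σ := by
          rw [hσ, hl]
          rcases lt_or_gt_of_ne hd0 with h | h
          · rw [if_pos h, abs_of_neg h]; field_simp
          · rw [if_neg (not_lt.mpr h.le), abs_of_pos h]; field_simp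
        have h := haffine X hX l hlpos (fun i => (σ / n - l * φ (X i)) / m)
        rw [h]
        congr 1
        rw [Prod.mk.injEq]
        refine ⟨?_, ?_⟩
        · have e1 : m * ∑ i, (σ / n - l * φ (X i)) / m
              = ∑ i, (σ / n - l * φ (X i)) := by
            rw [← Finset.sum_div, mul_div_assoc', mul_comm, mul_div_assoc,
              div_self hm]; ring
          rw [e1]
          have e2 : ∑ i, (σ / ↑n - l * φ (X i))
              = (n : ℝ) * (σ / n) - l * ∑ i, φ (X i) := by
            rw [Finset.sum_sub_distrib, Finset.sum_const, Finset.card_univ,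
              Fintype.card_fin, Finset.mul_sum, nsmul_eq_mul]
          rw [e2]
          have e3 : (n:ℝ) * (σ / n) = σ := by field_simp
          rw [e3, ← hs]
          have : l * (∑ i, φ (X i)) - l * s = σ := by
            rw [← mul_sub, ← hd, hld]
          linarith
        · funext i
          field_simp
          try ring
    -- define the constants
    refine ⟨0 ⊔ R (0, fun _ => (-1:ℝ) / n), 0 ⊔ R (0, fun _ => (0:ℝ) / n),
      0 ⊔ R (0, fun _ => (1:ℝ) / n), le_sup_left, le_sup_left, le_sup_left, ?_⟩
    intro X hX
    have h := hnorm X hX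
    by_cases h1 : (∑ i, φ (X i)) - φ (fun ω => ∑ i, X i ω) < 0
    · rw [if_pos h1] at h ⊢
      rw [h, sup_eq_right.mpr]
      rw [← h]; exact hpos X hX
    · rw [if_neg h1] at h ⊢
      by_cases h2 : (∑ i, φ (X i)) - φ (fun ω => ∑ i, X i ω) = 0
      · rw [if_pos h2] at h ⊢
        rw [h, sup_eq_right.mpr]
        rw [← h]; exact hpos X hX
      · rw [if_neg h2] at h ⊢
        rw [h, sup_eq_right.mpr]
        rw [← h]; exact hpos X hX
  · rintro ⟨C₁, C₂, C₃, hC1, hC2, hC3, hD⟩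
    refine ⟨⟨fun p => if (∑ i, p.2 i) - p.1 < 0 then C₁
        else if (∑ i, p.2 i) - p.1 = 0 then C₂ else C₃, ?_⟩, ?_, ?_, ?_⟩
    · intro X hX
      rw [hD X hX]
    · intro X hX
      rw [hD X hX]
      split_ifs <;> assumption
    · intro X hX c
      have hX' : ∀ i, X i + (fun _ => c i) ∈ 𝒳 := fun i =>
        hadd _ (hX i) _ (hconst (c i))
      rw [hD _ hX', hD X hX]
      have e1 : ∀ i : Fin n, φ (X i + (fun _ => c i)) = φ (X i) + m * c i :=
        fun i => hCA _ (hX i) (c i)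
      have e2 : φ (fun ω => ∑ i, (X i + (fun _ => c i) : Ω → ℝ) ω)
          = φ (fun ω => ∑ i, X i ω) + m * ∑ i, c i := by
        have e : (fun ω => ∑ i, (X i + (fun _ => c i) : Ω → ℝ) ω)
            = (fun ω => ∑ i, X i ω) + (fun _ => ∑ i, c i) := by
          funext ω; simp [Finset.sum_add_distrib]
        rw [e, hCA _ (hsum X hX)]
      have e3 : (∑ i, φ (X i + (fun _ => c i)))
          - φ (fun ω => ∑ i, (X i + (fun _ => c i) : Ω → ℝ) ω)
          = (∑ i, φ (X i)) - φ (fun ω => ∑ i, X i ω) := by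
        simp only [e1, e2, Finset.sum_add_distrib, Finset.mul_sum]
        ring
      rw [e3]
    · intro X hX l hl
      have hX' : ∀ i, l • X i ∈ 𝒳 := fun i => hsmul _ (hX i) l hl
      rw [hD _ hX', hD X hX]
      have e1 : ∀ i : Fin n, φ (l • X i) = l * φ (X i) := by
        intro i; rw [hPH _ (hX i) l hl, hγl l hl]
      have e2 : φ (fun ω => ∑ i, (l • X i) ω) = l * φ (fun ω => ∑ i, X i ω) := by
        have e : (fun ω => ∑ i, (l • X i) ω) = l • (fun ω => ∑ i, X i ω) := by
          funext ω; simp [Finset.mul_sum]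
        rw [e, hPH _ (hsum X hX) l hl, hγl l hl]
      have e3 : (∑ i, φ (l • X i)) - φ (fun ω => ∑ i, (l • X i) ω)
          = l * ((∑ i, φ (X i)) - φ (fun ω => ∑ i, X i ω)) := by
        simp only [e1, e2, ← Finset.mul_sum]; ring
      rw [e3]
      have hc1 : l * ((∑ i, φ (X i)) - φ (fun ω => ∑ i, X i ω)) < 0
          ↔ (∑ i, φ (X i)) - φ (fun ω => ∑ i, X i ω) < 0 := by
        constructor <;> intro hh <;> nlinarith
      have hc2 : l * ((∑ i, φ (X i)) - φ (fun ω => ∑ i, X i ω)) = 0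
          ↔ (∑ i, φ (X i)) - φ (fun ω => ∑ i, X i ω) = 0 := by
        rw [mul_eq_zero]; simp [ne_of_gt hl]
      by_cases h1 : (∑ i, φ (X i)) - φ (fun ω => ∑ i, X i ω) < 0
      · rw [if_pos h1, if_pos (hc1.mpr h1)]
      · rw [if_neg h1, if_neg (fun hh => h1 (hc1.mp hh))]
        by_cases h2 : (∑ i, φ (X i)) - φ (fun ω => ∑ i, X i ω) = 0
        · rw [if_pos h2, if_pos (hc2.mpr h2)]
        · rw [if_neg h2, if_neg (fun hh => h2 (hc2.mp hh))]
end

section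
/- A function R : ℝ^{n+1} → [-∞,∞] satisfies, for all x₀ ∈ ℝ, x = (x_1,…,x_n) ∈ ℝ^n, c = (c_1,…,c_n) ∈ ℝ^n and λ > 0, (i) R(x₀ + ∑_{i=1}^n c_i, x + c) = R(x₀, x) and (ii) R(λx₀, λx) = R(x₀, x), if and only if there exist C₁, C₂, C₃ ∈ [-∞,∞] such that R(x₀, x) = C₁·1{r<0} + C₂·1{r=0} + C₃·1{r>0} for all x₀ ∈ ℝ and x ∈ ℝ^n, where r = ∑_{i=1}^n x_i − x₀. -/
open scoped Classical in
/-- a function `R : ℝ^{n+1} → [-∞,∞]` is invariant under the two operations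
(i) `(x₀, x) ↦ (x₀ + ∑ c_i, x + c)` and (ii) `(x₀, x) ↦ (λx₀, λx)` for `λ > 0`
if and only if it is a three-value function of the sign of `r = ∑ x_i − x₀`. -/
theorem stmt_17 (n : ℕ) (hn : 0 < n) (R : ℝ × (Fin n → ℝ) → EReal) :
    ((∀ (x₀ : ℝ) (x c : Fin n → ℝ), R (x₀ + ∑ i, c i, x + c) = R (x₀, x))
      ∧ (∀ (x₀ : ℝ) (x : Fin n → ℝ) (l : ℝ), 0 < l → R (l * x₀, l • x) = R (x₀, x)))
    ↔ (∃ C₁ C₂ C₃ : EReal, ∀ (x₀ : ℝ) (x : Fin n → ℝ),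
        R (x₀, x) = if (∑ i, x i) - x₀ < 0 then C₁
                    else if (∑ i, x i) - x₀ = 0 then C₂
                    else C₃) := by
  constructor
  · rintro ⟨h1, h2⟩
    refine ⟨R (1, 0), R (0, 0), R (-1, 0), fun x₀ x => ?_⟩
    have key : R (x₀, x) = R (x₀ - ∑ i, x i, 0) := by
      have h := h1 (x₀ - ∑ i, x i) 0 x
      simpa using h
    set r : ℝ := (∑ i, x i) - x₀ with hr
    have hneg : x₀ - ∑ i, x i = -r := by rw [hr]; ring
    rw [key, hneg]
    rcases lt_trichotomy r 0 with h | h | h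
    · rw [if_pos h]
      have := h2 1 0 (-r) (by linarith)
      simpa using this
    · rw [if_neg (by simp [h]), if_pos h]
      simp [h]
    · rw [if_neg (by linarith), if_neg (by linarith)]
      have := h2 (-1) 0 r h
      simpa using this
  · rintro ⟨C₁, C₂, C₃, h⟩
    constructor
    · intro x₀ x c
      rw [h, h]
      have : (∑ i, (x + c) i) - (x₀ + ∑ i, c i) = (∑ i, x i) - x₀ := by
        simp only [Pi.add_apply, Finset.sum_add_distrib]; ring
      rw [this]
    · intro x₀ x l hl
      rw [h, h]
      have hs : (∑ i, (l • x) i) - l * x₀ = l * ((∑ i, x i) - x₀) := by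
        simp only [Pi.smul_apply, smul_eq_mul, mul_sub, Finset.mul_sum]
      rw [hs]
      rcases lt_trichotomy ((∑ i, x i) - x₀) 0 with h' | h' | h'
      · rw [if_pos h', if_pos (by exact mul_neg_of_pos_of_neg hl h')]
      · rw [h', mul_zero]
      · rw [if_neg (by nlinarith), if_neg (by nlinarith), if_neg (by linarith),
          if_neg (by linarith)]
end

section
/- Let φ : X → ℝ_+ be a non-negative risk measure on a convex cone X of random variables containing all constants, and define the family ρ = (ρ_α)_{α∈(0,∞)} by ρ_α = φ/α. Then for every α ∈ (0,∞) and every X ∈ X^n, DQ^ρ_α(X) = DR^φ(X). The same conclusion holds, with X = L^1, if ρ_α = b·E + c·φ/α for some b ∈ ℝ and c > 0, where E denotes expectation. -/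
open MeasureTheory Filter

open scoped Classical in
/-- The diversification ratio `DR^φ(X) = φ(∑ X_i) / ∑ φ(X_i)`, with the conventions
`0/0 = 0` and `1/0 = ∞` when the denominator vanishes. -/
noncomputable def DR {Ω : Type*} {n : ℕ} (φ : (Ω → ℝ) → ℝ) (X : Fin n → Ω → ℝ) : EReal :=
  if (∑ i, φ (X i)) = 0 then (if φ (fun ω => ∑ i, X i ω) = 0 then 0 else ⊤)
  else ((φ (fun ω => ∑ i, X i ω) / ∑ i, φ (X i) : ℝ) : EReal)

lemma key {Ω : Type*} {n : ℕ} (ρ : ℝ → (Ω → ℝ) → ℝ) (φ : (Ω → ℝ) → ℝ)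
    (α : ℝ) (hα : 0 < α) (X : Fin n → Ω → ℝ)
    (hN : 0 ≤ φ (fun ω => ∑ i, X i ω)) (hD : 0 ≤ ∑ i, φ (X i))
    (hcond : ∀ β : ℝ, 0 < β →
      (ρ β (fun ω => ∑ i, X i ω) ≤ ∑ i, ρ α (X i) ↔
       φ (fun ω => ∑ i, X i ω) / β ≤ (∑ i, φ (X i)) / α)) :
    DQ (⊤ : EReal) ρ α X = DR φ X := by
  classical
  set N := φ (fun ω => ∑ i, X i ω) with hNdef
  set D := ∑ i, φ (X i) with hDdef
  have hset : {β : ℝ | 0 < β ∧ (β : EReal) < (⊤ : EReal) ∧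
      ρ β (fun ω => ∑ i, X i ω) ≤ ∑ i, ρ α (X i)} = {β : ℝ | 0 < β ∧ N / β ≤ D / α} := by
    ext β
    simp only [Set.mem_setOf_eq, EReal.coe_lt_top, true_and]
    exact and_congr_right fun hβ => hcond β hβ
  rw [DQ, DR, hset]
  rcases eq_or_lt_of_le hD with hD0 | hD0
  · rcases eq_or_lt_of_le hN with hN0 | hN0
    · -- N = 0, D = 0
      have hs : {β : ℝ | 0 < β ∧ N / β ≤ D / α} = Set.Ioi 0 := by
        ext β; simp [← hN0, ← hD0]
      rw [hs, if_pos (Set.nonempty_Ioi), csInf_Ioi, ← hNdef, ← hDdef,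
        if_pos hD0.symm, if_pos hN0.symm]
      simp
    · -- N > 0, D = 0
      have hs : {β : ℝ | 0 < β ∧ N / β ≤ D / α} = ∅ := by
        ext β
        simp only [Set.mem_setOf_eq, Set.mem_empty_iff_false, iff_false, not_and, not_le]
        intro hβ
        rw [← hD0]
        simpa using div_pos hN0 hβ
      rw [hs, if_neg (by simp), if_pos hD0.symm, if_neg (by linarith)]
      exact EReal.top_mul_of_pos (by exact_mod_cast inv_pos.mpr hα)
  · -- D > 0
    have hs : {β : ℝ | 0 < β ∧ N / β ≤ D / α} = Set.Ioi 0 ∩ Set.Ici (N * α / D) := by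
      ext β
      simp only [Set.mem_setOf_eq, Set.mem_inter_iff, Set.mem_Ioi, Set.mem_Ici]
      refine and_congr_right fun hβ => ?_
      rw [div_le_div_iff₀ hβ hα, div_le_iff₀ hD0, mul_comm β D]
    have ha : 0 ≤ N * α / D := by positivity
    have hsInf : sInf {β : ℝ | 0 < β ∧ N / β ≤ D / α} = N * α / D := by
      rw [hs]
      rcases eq_or_lt_of_le ha with h0 | h0
      · rw [← h0]
        have : Set.Ioi (0:ℝ) ∩ Set.Ici 0 = Set.Ioi 0 := by
          ext β; simp; intro h; exact le_of_lt h
        rw [this, csInf_Ioi]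
      · have : Set.Ioi (0:ℝ) ∩ Set.Ici (N * α / D) = Set.Ici (N * α / D) := by
          ext β; simp only [Set.mem_inter_iff, Set.mem_Ioi, Set.mem_Ici, and_iff_right_iff_imp]
          intro h; linarith
        rw [this, csInf_Ici]
    have hne : {β : ℝ | 0 < β ∧ N / β ≤ D / α}.Nonempty := by
      rw [hs]
      exact ⟨N * α / D + 1, by constructor <;> simp <;> linarith⟩
    rw [if_pos hne, hsInf, if_neg (ne_of_gt hD0), ← EReal.coe_mul]
    congr 1
    rw [← hNdef, ← hDdef]
    field_simp
/-- for a non-negative risk measure `φ`, the DQ based on the family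
`ρ_α = φ/α` (index set `I = (0,∞)`) coincides with `DR^φ`; the same holds on `L¹`
for the family `ρ_α = b·E + c·φ/α` with `b ∈ ℝ`, `c > 0`. -/
theorem stmt_18 {Ω : Type*} [MeasurableSpace Ω] (μ : Measure Ω) [IsProbabilityMeasure μ]
    (hatomless : ∀ s : Set Ω, MeasurableSet s → 0 < μ s →
      ∃ t, t ⊆ s ∧ MeasurableSet t ∧ 0 < μ t ∧ μ t < μ s)
    (n : ℕ) (hn : 0 < n) :
    -- first part: a non-negative risk measure on a convex cone 𝒳
    (∀ 𝒳 : Set (Ω → ℝ),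
      (∀ X ∈ 𝒳, ∀ Y ∈ 𝒳, X + Y ∈ 𝒳) →
      (∀ X ∈ 𝒳, ∀ c : ℝ, 0 < c → c • X ∈ 𝒳) →
      (∀ c : ℝ, (fun _ : Ω => c) ∈ 𝒳) →
      ∀ φ : (Ω → ℝ) → ℝ, (∀ Y ∈ 𝒳, 0 ≤ φ Y) →
      ∀ α : ℝ, 0 < α → ∀ X : Fin n → Ω → ℝ, (∀ i, X i ∈ 𝒳) →
        DQ (⊤ : EReal) (fun β Y => φ Y / β) α X = DR φ X)
    -- second part: 𝒳 = L¹ and ρ_α = b·E + c·φ/α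
    ∧ (∀ φ : (Ω → ℝ) → ℝ, (∀ Y : Ω → ℝ, Integrable Y μ → 0 ≤ φ Y) →
      ∀ b c : ℝ, 0 < c →
      ∀ α : ℝ, 0 < α → ∀ X : Fin n → Ω → ℝ, (∀ i, Integrable (X i) μ) →
        DQ (⊤ : EReal) (fun β Y => b * ∫ ω, Y ω ∂μ + c * (φ Y / β)) α X = DR φ X) := by
  constructor
  · intro 𝒳 hadd hsmul hconst φ hφ α hα X hX
    have hSmem : (fun ω => ∑ i, X i ω) ∈ 𝒳 := by
      have h0 : (0 : Ω → ℝ) ∈ 𝒳 := by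
        have := hconst 0
        convert this using 1
        rfl
      have : (∑ i, X i) ∈ 𝒳 :=
        Finset.sum_induction X (· ∈ 𝒳) (fun a b ha hb => hadd a ha b hb) h0
          (fun i _ => hX i)
      convert this using 1
      funext ω
      simp [Finset.sum_apply]
    refine key _ φ α hα X (hφ _ hSmem) (Finset.sum_nonneg fun i _ => hφ _ (hX i)) ?_
    intro β hβ
    rw [Finset.sum_div]
  · intro φ hφ b c hc α hα X hX
    have hSint : Integrable (fun ω => ∑ i, X i ω) μ := by
      simpa using integrable_finset_sum Finset.univ (fun i _ => hX i)
    refine key _ φ α hα X (hφ _ hSint) (Finset.sum_nonneg fun i _ => hφ _ (hX i)) ?_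
    intro β hβ
    have hint : ∫ ω, (∑ i, X i ω) ∂μ = ∑ i, ∫ ω, X i ω ∂μ :=
      integral_finset_sum Finset.univ (fun i _ => hX i)
    simp only
    rw [Finset.sum_add_distrib, ← Finset.mul_sum, hint, add_le_add_iff_left,
      ← Finset.mul_sum, mul_le_mul_iff_right₀ hc, ← Finset.sum_div]
end
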